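/- arXiv:2503.12040 — 4 statements merged into one kernel-verified Lean document; each statement's English description precedes it below -/
import Mathlib

section
/- Let t be a positive integer, let λ be a strict partition, and let λλ be its doubled distinct partition. If t is not a part of λ and t is even with t/2 a part of λ, then n_t(λλ) = 2·n̂_t(λλ) + 1. If t is a part of λ and it is not the case that t is even with t/2 a part of λ, then n_t(λλ) = 2·n̂_t(λλ) − 1. In all other cases, n_t(λλ) = 2·n̂_t(λλ). -/
structure SeqPartition where
  parts : ℕ → ℕ
  antitone : ∀ ⦃i j : ℕ⦄, i ≤ j → parts j ≤ parts i
  finite_support : (Function.support parts).Finite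

namespace SeqPartition

noncomputable def size (p : SeqPartition) : ℕ := p.finite_support.toFinset.sum p.parts

noncomputable def conj (p : SeqPartition) (j : ℕ) : ℕ := Set.ncard {i : ℕ | j < p.parts i}

noncomputable def hook (p : SeqPartition) (i j : ℕ) : ℤ :=
  (p.parts i : ℤ) + (p.conj j : ℤ) - (i : ℤ) - (j : ℤ) - 1

noncomputable def nHooks (p : SeqPartition) (t : ℕ) : ℕ :=
  Set.ncard {c : ℕ × ℕ | c.2 < p.parts c.1 ∧ p.hook c.1 c.2 = (t : ℤ)}

noncomputable def nHooksAbove (p : SeqPartition) (t : ℕ) : ℕ :=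
  Set.ncard {c : ℕ × ℕ | c.2 < p.parts c.1 ∧ c.1 < c.2 ∧ p.hook c.1 c.2 = (t : ℤ)}

noncomputable def durfee (p : SeqPartition) : ℕ := Set.ncard {i : ℕ | i < p.parts i}

def IsDoubledDistinct (p : SeqPartition) : Prop :=
  ∃ (ℓ : ℕ) (μ : ℕ → ℕ),
    (∀ i < ℓ, 0 < μ i) ∧
    (∀ i j : ℕ, i < j → j < ℓ → μ j < μ i) ∧
    p.durfee = ℓ ∧
    (∀ i < ℓ, p.parts i = μ i + i + 1) ∧
    (∀ i < ℓ, p.conj i = μ i + i)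

def IsSelfConjugate (p : SeqPartition) : Prop := ∀ j, p.conj j = p.parts j

end SeqPartition

noncomputable def qPoch (a q : ℂ) (n : ℕ) : ℂ := ∏ k ∈ Finset.range n, (1 - a * q ^ k)

noncomputable def qPochInf (a q : ℂ) : ℂ := ∏' n : ℕ, (1 - a * q ^ n)

lemma lower_eq_Iio {T : Set ℕ} (hf : T.Finite)
    (hl : ∀ ⦃a b : ℕ⦄, a ≤ b → b ∈ T → a ∈ T) : T = Set.Iio T.ncard := by
  rcases T.eq_empty_or_nonempty with h | h
  · rw [h, Set.ncard_empty]; ext x; simp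
  · have hbdd : BddAbove T := hf.bddAbove
    have hmem : sSup T ∈ T := Nat.sSup_mem h hbdd
    have hT : T = Set.Iic (sSup T) :=
      Set.eq_of_subset_of_subset (fun x hx => le_csSup hbdd hx) (fun x hx => hl hx hmem)
    rw [hT]
    have h1 : (Set.Iic (sSup T)).ncard = sSup T + 1 := by
      rw [← Finset.coe_Iic, Set.ncard_coe_finset, Nat.card_Iic]
    rw [h1]; ext x; simp [Nat.lt_succ_iff]

lemma ncard_Iio (n : ℕ) : (Set.Iio n).ncard = n := by
  rw [← Finset.coe_range, Set.ncard_coe_finset, Finset.card_range]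

lemma colset_fin (p : SeqPartition) (j : ℕ) : {x : ℕ | j < p.parts x}.Finite :=
  p.finite_support.subset (fun x hx => by
    simp only [Set.mem_setOf_eq] at hx
    simp only [Function.mem_support]; omega)

lemma colset_eq (p : SeqPartition) (j : ℕ) : {x : ℕ | j < p.parts x} = Set.Iio (p.conj j) :=
  lower_eq_Iio (colset_fin p j) (fun _ _ hab hb => lt_of_lt_of_le hb (p.antitone hab))

lemma lt_conj_iff (p : SeqPartition) (i j : ℕ) : i < p.conj j ↔ j < p.parts i := by
  have h := colset_eq p j
  constructor
  · intro hi
    have : i ∈ {x : ℕ | j < p.parts x} := by rw [h]; exact hi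
    exact this
  · intro hj
    have h2 : i ∈ {x : ℕ | j < p.parts x} := hj
    rw [h] at h2; exact h2

lemma parts_eq_ncard (p : SeqPartition) (i : ℕ) : p.parts i = Set.ncard {j : ℕ | i < p.conj j} := by
  have h : {j : ℕ | i < p.conj j} = Set.Iio (p.parts i) := by
    ext j; simp [lt_conj_iff]
  rw [h, ncard_Iio]

theorem doubled_distinct_hook_diagonal_relation
    (t : ℕ) (ht0 : 0 < t) (ℓ : ℕ) (μ : ℕ → ℕ)
    (hpos : ∀ i < ℓ, 0 < μ i)
    (hstrict : ∀ i j : ℕ, i < j → j < ℓ → μ j < μ i)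
    (p : SeqPartition)
    (hdurfee : p.durfee = ℓ)
    (hparts : ∀ i < ℓ, p.parts i = μ i + i + 1)
    (hconj : ∀ i < ℓ, p.conj i = μ i + i) :
    ((¬ (∃ i < ℓ, μ i = t)) ∧ (Even t ∧ ∃ i < ℓ, 2 * μ i = t) →
        p.nHooks t = 2 * p.nHooksAbove t + 1) ∧
    ((∃ i < ℓ, μ i = t) ∧ ¬ (Even t ∧ ∃ i < ℓ, 2 * μ i = t) →
        p.nHooks t + 1 = 2 * p.nHooksAbove t) ∧
    (¬ ((¬ (∃ i < ℓ, μ i = t)) ∧ (Even t ∧ ∃ i < ℓ, 2 * μ i = t)) ∧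
      ¬ ((∃ i < ℓ, μ i = t) ∧ ¬ (Even t ∧ ∃ i < ℓ, 2 * μ i = t)) →
        p.nHooks t = 2 * p.nHooksAbove t) := by
  classical
  -- durfee square characterization
  have hdset : {i : ℕ | i < p.parts i} = Set.Iio ℓ := by
    have hfin : {i : ℕ | i < p.parts i}.Finite := p.finite_support.subset (by
      intro x hx; simp only [Set.mem_setOf_eq] at hx
      simp only [Function.mem_support]; omega)
    have hlow : ∀ ⦃a b : ℕ⦄, a ≤ b → b ∈ {i : ℕ | i < p.parts i} → a ∈ {i : ℕ | i < p.parts i} := by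
      intro a b hab hb
      simp only [Set.mem_setOf_eq] at *
      have := p.antitone hab
      omega
    have h := lower_eq_Iio hfin hlow
    rwa [show {i : ℕ | i < p.parts i}.ncard = ℓ from hdurfee] at h
  have hdiag : ∀ i : ℕ, i < p.parts i ↔ i < ℓ := by
    intro i
    have := Set.ext_iff.mp hdset i
    simpa using this
  have hple : ∀ i, ℓ ≤ i → p.parts i ≤ ℓ := by
    intro i hi
    have h1 : ¬ (ℓ < p.parts ℓ) := by rw [hdiag]; omega
    have := p.antitone hi
    omega
  have hMU : ∀ k i, i + k < ℓ → μ (i + k) + k ≤ μ i := by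
    intro k
    induction k with
    | zero => intro i _; simp
    | succ n ih =>
      intro i hi
      have h1 : μ (i+1) < μ i := hstrict i (i+1) (by omega) (by omega)
      have h2 := ih (i+1) (by omega)
      rw [show i + (n+1) = i + 1 + n by omega]
      omega
  have hmularge : ∀ i, i < ℓ → ℓ ≤ μ i + i := by
    intro i hi
    have h := hMU (ℓ - 1 - i) i (by omega)
    have h2 := hpos (ℓ - 1) (by omega)
    rw [show i + (ℓ - 1 - i) = ℓ - 1 by omega] at h
    omega
  have hbig : ∀ i, i < ℓ → ℓ < p.parts i := by
    intro i hi
    rw [hparts i hi]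
    have := hmularge i hi
    omega
  have hconjle : ∀ j, ℓ ≤ j → p.conj j ≤ ℓ := by
    intro j hj
    have hsub : {x : ℕ | j < p.parts x} ⊆ Set.Iio ℓ := by
      intro x hx
      simp only [Set.mem_setOf_eq] at hx
      simp only [Set.mem_Iio]
      by_contra h
      have := hple x (by omega)
      omega
    have := Set.ncard_le_ncard hsub (Set.finite_Iio ℓ)
    rwa [ncard_Iio] at this
  have hconjl : p.conj ℓ = ℓ := by
    have h : {x : ℕ | ℓ < p.parts x} = Set.Iio ℓ := by
      ext x
      simp only [Set.mem_setOf_eq, Set.mem_Iio]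
      constructor
      · intro h; by_contra hc; have := hple x (by omega); omega
      · intro h; exact hbig x h
    show Set.ncard {x : ℕ | ℓ < p.parts x} = ℓ
    rw [h, ncard_Iio]
  have hconjsucc : ∀ i, ℓ ≤ i → p.conj (i+1) = p.parts i := by
    intro i hi
    rw [parts_eq_ncard p i]
    show Set.ncard {x : ℕ | i + 1 < p.parts x} = _
    congr 1
    ext r
    simp only [Set.mem_setOf_eq]
    by_cases hr : r < ℓ
    · rw [hparts r hr, hconj r hr]; omega
    · constructor
      · intro h; have := hple r (by omega); omega
      · intro h; have := hconjle r (by omega); omega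
  have hinjμ : ∀ i k, i < ℓ → k < ℓ → μ i = μ k → i = k := by
    intro i k hi hk he
    rcases Nat.lt_trichotomy i k with h | h | h
    · have := hstrict i k h hk; omega
    · exact h
    · have := hstrict k i h hi; omega
  -- sets
  set Sc : Set (ℕ × ℕ) := {c : ℕ × ℕ | c.2 < p.parts c.1 ∧ p.hook c.1 c.2 = (t : ℤ)} with hScdef
  set A : Set (ℕ × ℕ) := {c : ℕ × ℕ | c ∈ Sc ∧ c.1 < c.2} with hAdef
  set D : Set (ℕ × ℕ) := {c : ℕ × ℕ | c ∈ Sc ∧ c.1 = c.2} with hDdef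
  set B : Set (ℕ × ℕ) := {c : ℕ × ℕ | c ∈ Sc ∧ c.2 < c.1} with hBdef
  set E : Set (ℕ × ℕ) := {c : ℕ × ℕ | c ∈ A ∧ c.2 = ℓ} with hEdef
  have hSfin : Sc.Finite := by
    apply ((Set.finite_Iio (p.conj 0)).prod (Set.finite_Iio (p.parts 0))).subset
    intro c hc
    obtain ⟨h1, _⟩ := hc
    simp only [Set.mem_prod, Set.mem_Iio]
    constructor
    · exact (lt_conj_iff p c.1 0).mpr (by omega)
    · exact lt_of_lt_of_le h1 (p.antitone (Nat.zero_le c.1))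
  have hAfin : A.Finite := hSfin.subset (fun c hc => hc.1)
  have hDfin : D.Finite := hSfin.subset (fun c hc => hc.1)
  have hBfin : B.Finite := hSfin.subset (fun c hc => hc.1)
  have hunion : Sc = A ∪ D ∪ B := by
    ext c
    simp only [Set.mem_union, hAdef, hDdef, hBdef, Set.mem_setOf_eq]
    constructor
    · intro h
      rcases Nat.lt_trichotomy c.1 c.2 with hlt | heq | hgt
      · exact Or.inl (Or.inl ⟨h, hlt⟩)
      · exact Or.inl (Or.inr ⟨h, heq⟩)
      · exact Or.inr ⟨h, hgt⟩
    · rintro ((⟨h, _⟩ | ⟨h, _⟩) | ⟨h, _⟩) <;> exact h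
  have hcardsum : Sc.ncard = A.ncard + D.ncard + B.ncard := by
    rw [hunion]
    rw [Set.ncard_union_eq (by
        rw [Set.disjoint_left]
        rintro ⟨i, j⟩ hc hc'
        simp only [Set.mem_union, hAdef, hDdef, hBdef, Set.mem_setOf_eq] at hc hc'
        omega) (hAfin.union hDfin) hBfin,
      Set.ncard_union_eq (by
        rw [Set.disjoint_left]
        rintro ⟨i, j⟩ hc hc'
        simp only [hAdef, hDdef, Set.mem_setOf_eq] at hc hc'
        omega) hAfin hDfin]
  -- the hook-preserving map from below-diagonal cells to above-diagonal cells
  set f : ℕ × ℕ → ℕ × ℕ := fun c => if c.1 < ℓ then (c.2, c.1) else (c.2, c.1 + 1) with hfdef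
  have hBcol : ∀ c ∈ B, c.2 < ℓ := by
    intro c hc
    obtain ⟨⟨h1, _⟩, h3⟩ := hc
    by_contra h
    have := hple c.1 (by omega)
    omega
  have hinj : Set.InjOn f B := by
    intro c hc c' hc' heq
    have h3 : c.2 < c.1 := hc.2
    have h3' : c'.2 < c'.1 := hc'.2
    simp only [hfdef] at heq
    split_ifs at heq with h h' h'
    all_goals (
      simp only [Prod.mk.injEq] at heq
      rw [Prod.ext_iff]
      constructor <;> omega)
  have himg : f '' B = A \ E := by
    apply Set.eq_of_subset_of_subset
    · rintro x ⟨c, hc, rfl⟩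
      have hjl : c.2 < ℓ := hBcol c hc
      obtain ⟨⟨h1, h2⟩, h3⟩ := hc
      simp only [Set.mem_diff, hAdef, hEdef, hScdef, Set.mem_setOf_eq]
      by_cases hil : c.1 < ℓ
      · have hff : f c = (c.2, c.1) := by simp [hfdef, hil]
        rw [hff]
        refine ⟨⟨⟨?_, ?_⟩, h3⟩, ?_⟩
        · show c.1 < p.parts c.2
          rw [hparts c.2 hjl]
          have hm := hMU (c.1 - c.2) c.2 (by omega)
          rw [show c.2 + (c.1 - c.2) = c.1 by omega] at hm
          have := hpos c.1 hil
          omega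
        · show p.hook c.2 c.1 = (t : ℤ)
          rw [← h2]
          simp only [SeqPartition.hook]
          rw [hparts c.1 hil, hparts c.2 hjl, hconj c.1 hil, hconj c.2 hjl]
          omega
        · simp only [not_and]
          intro _
          show ¬ (c.1 = ℓ)
          omega
      · have hff : f c = (c.2, c.1 + 1) := by simp [hfdef, hil]
        rw [hff]
        refine ⟨⟨⟨?_, ?_⟩, by omega⟩, ?_⟩
        · show c.1 + 1 < p.parts c.2
          have hd : c.1 < p.conj c.2 := (lt_conj_iff p c.1 c.2).mpr h1
          rw [hconj c.2 hjl] at hd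
          rw [hparts c.2 hjl]
          omega
        · show p.hook c.2 (c.1 + 1) = (t : ℤ)
          rw [← h2]
          simp only [SeqPartition.hook]
          rw [hparts c.2 hjl, hconj c.2 hjl, hconjsucc c.1 (by omega)]
          omega
        · simp only [not_and]
          intro _
          show ¬ (c.1 + 1 = ℓ)
          omega
    · intro x hx
      simp only [Set.mem_diff, hAdef, hEdef, hScdef, Set.mem_setOf_eq] at hx
      obtain ⟨⟨⟨h1, h2⟩, h3⟩, hxE⟩ := hx
      have hx2 : x.2 ≠ ℓ := by
        intro h
        exact hxE ⟨⟨⟨h1, h2⟩, h3⟩, h⟩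
      by_cases hbl : x.2 < ℓ
      · refine ⟨(x.2, x.1), ?_, ?_⟩
        · simp only [hBdef, hScdef, Set.mem_setOf_eq]
          refine ⟨⟨?_, ?_⟩, h3⟩
          · show x.1 < p.parts x.2
            rw [hparts x.2 hbl]
            omega
          · show p.hook x.2 x.1 = (t : ℤ)
            rw [← h2]
            simp only [SeqPartition.hook]
            rw [hparts x.1 (by omega), hparts x.2 hbl, hconj x.1 (by omega), hconj x.2 hbl]
            omega
        · simp only [hfdef, if_pos hbl]
      · have hbl2 : ℓ < x.2 := by omega
        have ha : x.1 < p.conj x.2 := (lt_conj_iff p x.1 x.2).mpr h1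
        have hal : x.1 < ℓ := lt_of_lt_of_le ha (hconjle x.2 (by omega))
        have hps : p.parts (x.2 - 1) = p.conj x.2 := by
          have h9 := hconjsucc (x.2 - 1) (by omega)
          rw [show x.2 - 1 + 1 = x.2 by omega] at h9
          omega
        refine ⟨(x.2 - 1, x.1), ?_, ?_⟩
        · simp only [hBdef, hScdef, Set.mem_setOf_eq]
          refine ⟨⟨?_, ?_⟩, by omega⟩
          · show x.1 < p.parts (x.2 - 1)
            omega
          · show p.hook (x.2 - 1) x.1 = (t : ℤ)
            rw [← h2]
            simp only [SeqPartition.hook]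
            rw [hconj x.1 hal, hparts x.1 hal, hps]
            omega
        · have h9 : ¬ (x.2 - 1 < ℓ) := by omega
          simp only [hfdef, if_neg h9]
          rw [show x.2 - 1 + 1 = x.2 by omega]
  have hEsubA : E ⊆ A := fun c hc => hc.1
  have hBcard : B.ncard = (A \ E).ncard := by
    rw [← himg, Set.ncard_image_of_injOn hinj]
  have hAE : (A \ E).ncard + E.ncard = A.ncard :=
    Set.ncard_diff_add_ncard_of_subset hEsubA hAfin
  have hDcard : D.ncard = (if ∃ i < ℓ, 2 * μ i = t then 1 else 0) := by
    have hDset : D = {c : ℕ × ℕ | c.1 < ℓ ∧ 2 * μ c.1 = t ∧ c.2 = c.1} := by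
      ext c
      simp only [hDdef, hScdef, Set.mem_setOf_eq]
      constructor
      · rintro ⟨⟨h1, h2⟩, h3⟩
        rw [← h3] at h1 h2
        have hil : c.1 < ℓ := (hdiag c.1).mp h1
        refine ⟨hil, ?_, h3.symm⟩
        simp only [SeqPartition.hook] at h2
        rw [hparts c.1 hil, hconj c.1 hil] at h2
        omega
      · rintro ⟨h1, h2, h3⟩
        rw [h3]
        refine ⟨⟨(hdiag c.1).mpr h1, ?_⟩, rfl⟩
        simp only [SeqPartition.hook]
        rw [hparts c.1 h1, hconj c.1 h1]
        omega
    rw [hDset]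
    split_ifs with h
    · obtain ⟨k, hk, hk2⟩ := h
      have hsing : {c : ℕ × ℕ | c.1 < ℓ ∧ 2 * μ c.1 = t ∧ c.2 = c.1} = {(k, k)} := by
        ext c
        simp only [Set.mem_setOf_eq, Set.mem_singleton_iff, Prod.ext_iff]
        constructor
        · rintro ⟨h1, h2, h3⟩
          have : c.1 = k := hinjμ c.1 k h1 hk (by omega)
          exact ⟨this, by omega⟩
        · rintro ⟨ha, hb⟩
          exact ⟨by rw [ha]; exact hk, by rw [ha]; exact hk2, by omega⟩
      rw [hsing, Set.ncard_singleton]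
    · push_neg at h
      have hemp : {c : ℕ × ℕ | c.1 < ℓ ∧ 2 * μ c.1 = t ∧ c.2 = c.1} = ∅ := by
        ext c
        simp only [Set.mem_setOf_eq, Set.mem_empty_iff_false, iff_false, not_and]
        intro h1 h2
        have := h c.1 h1
        omega
      rw [hemp, Set.ncard_empty]
  have hEcard : E.ncard = (if ∃ i < ℓ, μ i = t then 1 else 0) := by
    have hEset : E = {c : ℕ × ℕ | c.1 < ℓ ∧ μ c.1 = t ∧ c.2 = ℓ} := by
      ext c
      simp only [hEdef, hAdef, hScdef, Set.mem_setOf_eq]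
      constructor
      · rintro ⟨⟨⟨h1, h2⟩, h3⟩, h4⟩
        have hil : c.1 < ℓ := by omega
        refine ⟨hil, ?_, h4⟩
        simp only [SeqPartition.hook] at h2
        rw [h4, hparts c.1 hil, hconjl] at h2
        omega
      · rintro ⟨h1, h2, h3⟩
        refine ⟨⟨⟨?_, ?_⟩, by omega⟩, h3⟩
        · rw [h3]; exact hbig c.1 h1
        · simp only [SeqPartition.hook]
          rw [h3, hparts c.1 h1, hconjl]
          omega
    rw [hEset]
    split_ifs with h
    · obtain ⟨k, hk, hk2⟩ := h
      have hsing : {c : ℕ × ℕ | c.1 < ℓ ∧ μ c.1 = t ∧ c.2 = ℓ} = {(k, ℓ)} := by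
        ext c
        simp only [Set.mem_setOf_eq, Set.mem_singleton_iff, Prod.ext_iff]
        constructor
        · rintro ⟨h1, h2, h3⟩
          have : c.1 = k := hinjμ c.1 k h1 hk (by omega)
          exact ⟨this, h3⟩
        · rintro ⟨ha, hb⟩
          exact ⟨by rw [ha]; exact hk, by rw [ha]; exact hk2, hb⟩
      rw [hsing, Set.ncard_singleton]
    · push_neg at h
      have hemp : {c : ℕ × ℕ | c.1 < ℓ ∧ μ c.1 = t ∧ c.2 = ℓ} = ∅ := by
        ext c
        simp only [Set.mem_setOf_eq, Set.mem_empty_iff_false, iff_false, not_and]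
        intro h1 h2
        have := h c.1 h1
        omega
      rw [hemp, Set.ncard_empty]
  have hnS : p.nHooks t = Sc.ncard := by rw [hScdef]; rfl
  have hnA : p.nHooksAbove t = A.ncard := by
    rw [hAdef, hScdef]
    show _ = Set.ncard {c : ℕ × ℕ | (c.2 < p.parts c.1 ∧ p.hook c.1 c.2 = (t : ℤ)) ∧ c.1 < c.2}
    unfold SeqPartition.nHooksAbove
    congr 1
    ext c
    simp only [Set.mem_setOf_eq]
    tauto
  have hQiff : (Even t ∧ ∃ i < ℓ, 2 * μ i = t) ↔ (∃ i < ℓ, 2 * μ i = t) := by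
    constructor
    · exact fun h => h.2
    · intro h
      refine ⟨?_, h⟩
      obtain ⟨i, hi, h2⟩ := h
      exact ⟨μ i, by omega⟩
  have key : p.nHooks t + E.ncard = 2 * p.nHooksAbove t + D.ncard := by
    rw [hnS, hnA, hcardsum, hBcard]
    omega
  refine ⟨?_, ?_, ?_⟩
  · rintro ⟨hnp, hq⟩
    rw [hEcard, if_neg hnp, hDcard, if_pos (hQiff.mp hq)] at key
    omega
  · rintro ⟨hp, hnq⟩
    rw [hEcard, if_pos hp, hDcard, if_neg (fun h => hnq (hQiff.mpr h))] at key
    omega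
  · rintro ⟨hc1, hc2⟩
    by_cases hp : ∃ i < ℓ, μ i = t
    · by_cases hq : ∃ i < ℓ, 2 * μ i = t
      · rw [hEcard, if_pos hp, hDcard, if_pos hq] at key
        omega
      · exact absurd ⟨hp, fun hc => hq hc.2⟩ hc2
    · by_cases hq : ∃ i < ℓ, 2 * μ i = t
      · exact absurd ⟨hp, hQiff.mpr hq⟩ hc1
      · rw [hEcard, if_neg hp, hDcard, if_neg hq] at key
        omega
end

section
/- For every X ∈ ℂ and every q ∈ ℂ with |q| < 1, the series ∑_{n≥0} q^{n(n+1)/2}·(X;q)_n/(q;q)_n converges absolutely and equals (Xq;q²)_∞·(−q;q)_∞. -/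
open Filter Finset

namespace RF

lemma tri_succ (n : ℕ) : (n+1)*(n+2)/2 = n*(n+1)/2 + (n+1) := by
  have e1 : (n+1)*(n+2) = n*(n+1)+2*(n+1) := by ring
  obtain ⟨k, hk⟩ := Nat.even_mul_succ_self n
  omega

lemma tri' (n : ℕ) : (n+1)*n/2 = n*(n-1)/2 + n := by
  cases n with
  | zero => rfl
  | succ m =>
    have e2 : m + 1 - 1 = m := rfl
    rw [e2]
    obtain ⟨k, hk⟩ := Nat.even_mul_succ_self m
    have e3 : (m+1+1)*(m+1) = m*(m+1) + 2*(m+1) := by ring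
    have e4 : (m+1)*m = m*(m+1) := Nat.mul_comm _ _
    omega

lemma tri_le (n : ℕ) : n*(n-1)/2 ≤ n*(n+1)/2 :=
  Nat.div_le_div_right (Nat.mul_le_mul_left _ (by omega))

lemma qPoch_succ (a q : ℂ) (n : ℕ) : qPoch a q (n+1) = qPoch a q n * (1 - a * q^n) :=
  Finset.prod_range_succ _ _

lemma qPoch_succ' (a q : ℂ) (n : ℕ) : qPoch a q (n+1) = (1 - a) * qPoch (a*q) q n := by
  rw [qPoch, Finset.prod_range_succ', qPoch, mul_comm]
  have : ∀ k, (1 : ℂ) - a * q ^ (k+1) = 1 - (a*q) * q^k := by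
    intro k; rw [pow_succ']; ring
  simp only [this, pow_zero, mul_one]

lemma qPoch_zero_left (q : ℂ) (n : ℕ) : qPoch 0 q n = 1 := by simp [qPoch]

lemma qPoch_zero (a q : ℂ) : qPoch a q 0 = 1 := by simp [qPoch]

section
variable {q : ℂ} (hq : ‖q‖ < 1)
include hq

lemma one_sub_ne (k : ℕ) : (1:ℂ) - q * q ^ k ≠ 0 := by
  intro h
  have h1 : q * q ^ k = 1 := by linear_combination -h
  have : ‖q * q ^ k‖ < 1 := by
    calc ‖q * q ^ k‖ = ‖q‖ * ‖q‖^k := by rw [norm_mul, norm_pow]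
    _ ≤ ‖q‖ * 1 := by
        gcongr
        exact pow_le_one₀ (norm_nonneg _) hq.le
    _ < 1 := by simpa using hq
  rw [h1] at this; simp at this

lemma one_sub_pow_ne (k : ℕ) : (1:ℂ) - q ^ (k+1) ≠ 0 := by
  have := one_sub_ne hq k
  rwa [← pow_succ'] at this

lemma qq_ne (n : ℕ) : qPoch q q n ≠ 0 :=
  Finset.prod_ne_zero_iff.2 fun k _ => one_sub_ne hq k

lemma qq_norm_ge (n : ℕ) : (1 - ‖q‖)^n ≤ ‖qPoch q q n‖ := by
  rw [qPoch, norm_prod,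
    show ((1:ℝ)-‖q‖)^n = ∏ _k ∈ Finset.range n, (1-‖q‖) by simp]
  refine Finset.prod_le_prod (fun k _ => by linarith) (fun k _ => ?_)
  have h1 : ‖q * q ^ k‖ ≤ ‖q‖ := by
    rw [norm_mul, norm_pow]
    calc ‖q‖ * ‖q‖^k ≤ ‖q‖ * 1 := by
          gcongr; exact pow_le_one₀ (norm_nonneg _) hq.le
      _ = ‖q‖ := mul_one _
  calc 1 - ‖q‖ ≤ 1 - ‖q * q^k‖ := by linarith
    _ ≤ ‖1 - q * q^k‖ := by
        have := norm_sub_norm_le (1:ℂ) (q * q^k)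
        simpa using this

lemma qq_norm_pos (n : ℕ) : 0 < ‖qPoch q q n‖ :=
  lt_of_lt_of_le (pow_pos (by linarith) n) (qq_norm_ge hq n)

lemma poch_norm_le (X : ℂ) (n : ℕ) : ‖qPoch X q n‖ ≤ (1 + ‖X‖)^n := by
  rw [qPoch, norm_prod,
    show ((1:ℝ)+‖X‖)^n = ∏ _k ∈ Finset.range n, (1+‖X‖) by simp]
  refine Finset.prod_le_prod (fun k _ => norm_nonneg _) (fun k _ => ?_)
  calc ‖1 - X * q^k‖ ≤ ‖(1:ℂ)‖ + ‖X * q^k‖ := norm_sub_le _ _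
    _ ≤ 1 + ‖X‖ := by
        rw [norm_one, norm_mul, norm_pow]
        have : ‖X‖ * ‖q‖^k ≤ ‖X‖ * 1 := by
          gcongr; exact pow_le_one₀ (norm_nonneg _) hq.le
        linarith

lemma poch_sub_one_le (s : ℂ) (hs : ‖s‖ ≤ 1) (n : ℕ) :
    ‖qPoch s q n - 1‖ ≤ ‖s‖ * n * 2^n := by
  induction n with
  | zero => simp [qPoch]
  | succ m ih =>
    have hqk : ‖1 - s * q^m‖ ≤ 2 := by
      calc ‖1 - s * q^m‖ ≤ ‖(1:ℂ)‖ + ‖s * q^m‖ := norm_sub_le _ _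
        _ ≤ 1 + 1 := by
            rw [norm_one, norm_mul, norm_pow]
            have h2 : ‖s‖ * ‖q‖^m ≤ 1 * 1 :=
              mul_le_mul hs (pow_le_one₀ (norm_nonneg _) hq.le) (by positivity) zero_le_one
            linarith
        _ = 2 := by norm_num
    have key : qPoch s q (m+1) - 1 = (qPoch s q m - 1) * (1 - s * q^m) + (- s * q^m) := by
      rw [qPoch_succ]; ring
    calc ‖qPoch s q (m+1) - 1‖ ≤ ‖(qPoch s q m - 1) * (1 - s * q^m)‖ + ‖-s * q^m‖ := by
          rw [key]; exact norm_add_le _ _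
      _ ≤ (‖s‖ * m * 2^m) * 2 + ‖s‖ := by
          gcongr
          · rw [norm_mul]
            exact mul_le_mul ih hqk (norm_nonneg _) (by positivity)
          · rw [neg_mul, norm_neg, norm_mul, norm_pow]
            have : ‖s‖ * ‖q‖^m ≤ ‖s‖ * 1 := by
              gcongr; exact pow_le_one₀ (norm_nonneg _) hq.le
            linarith
      _ ≤ ‖s‖ * ((m:ℝ)+1) * 2^(m+1) := by
          rw [pow_succ]
          have h1 : (1:ℝ) ≤ 2^m := one_le_pow₀ (by norm_num)
          have hs0 : 0 ≤ ‖s‖ := norm_nonneg _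
          nlinarith
      _ = ‖s‖ * ((m+1 : ℕ) : ℝ) * 2^(m+1) := by push_cast; ring

end

noncomputable def u (q X : ℂ) (n : ℕ) : ℂ := q ^ (n * (n + 1) / 2) * qPoch X q n / qPoch q q n
noncomputable def F (q X : ℂ) : ℂ := ∑' n : ℕ, u q X n
noncomputable def ee (q t : ℂ) (n : ℕ) : ℂ := q ^ (n * (n - 1) / 2) * t ^ n / qPoch q q n
noncomputable def G (q t : ℂ) : ℂ := ∑' n : ℕ, ee q t n

section
variable {q : ℂ} (hq : ‖q‖ < 1)
include hq

lemma summable_aux (c : ℝ) (hc : 0 ≤ c) :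
    Summable (fun n : ℕ => ‖q‖ ^ (n * (n - 1) / 2) * c ^ n) := by
  refine summable_of_ratio_norm_eventually_le (r := 1/2) (by norm_num) ?_
  have h0 : Tendsto (fun n : ℕ => ‖q‖ ^ n * c) atTop (nhds 0) := by
    simpa using (tendsto_pow_atTop_nhds_zero_of_lt_one (norm_nonneg q) hq).mul_const c
  filter_upwards [h0.eventually_le_const (by norm_num : (0:ℝ) < 1/2)] with n hn
  have hqn : 0 ≤ ‖q‖ ^ (n * (n-1)/2) * c ^ n := by positivity
  rw [Real.norm_of_nonneg (by positivity), Real.norm_of_nonneg hqn]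
  calc ‖q‖ ^ ((n+1) * n / 2) * c ^ (n+1)
      = (‖q‖ ^ n * c) * (‖q‖ ^ (n * (n-1)/2) * c ^ n) := by
        rw [tri', pow_add, pow_succ]; ring
    _ ≤ (1/2) * (‖q‖ ^ (n * (n-1)/2) * c ^ n) := by gcongr

lemma norm_u_le (X : ℂ) (n : ℕ) :
    ‖u q X n‖ ≤ ‖q‖ ^ (n * (n-1)/2) * ((1 + ‖X‖)/(1 - ‖q‖)) ^ n := by
  have h1 : (0:ℝ) < 1 - ‖q‖ := by linarith
  rw [u, norm_div, norm_mul, norm_pow, div_pow]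
  rw [div_le_iff₀ (qq_norm_pos hq n)]
  have step1 : ‖q‖ ^ (n*(n+1)/2) * ‖qPoch X q n‖ ≤ ‖q‖ ^ (n*(n-1)/2) * (1+‖X‖)^n :=
    mul_le_mul (pow_le_pow_of_le_one (norm_nonneg _) hq.le (tri_le n))
      (poch_norm_le hq X n) (norm_nonneg _) (by positivity)
  calc ‖q‖ ^ (n*(n+1)/2) * ‖qPoch X q n‖ ≤ ‖q‖ ^ (n*(n-1)/2) * (1+‖X‖)^n := step1
    _ = ‖q‖ ^ (n*(n-1)/2) * ((1+‖X‖)^n/(1-‖q‖)^n) * (1-‖q‖)^n := by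
        rw [mul_assoc, div_mul_cancel₀ _ (by positivity : ((1:ℝ)-‖q‖)^n ≠ 0)]
    _ ≤ ‖q‖ ^ (n*(n-1)/2) * ((1+‖X‖)^n/(1-‖q‖)^n) * ‖qPoch q q n‖ :=
        mul_le_mul_of_nonneg_left (qq_norm_ge hq n) (by positivity)

lemma summable_norm_u (X : ℂ) : Summable (fun n : ℕ => ‖u q X n‖) := by
  have h1 : (0:ℝ) < 1 - ‖q‖ := by linarith
  refine Summable.of_nonneg_of_le (fun n => norm_nonneg _) (norm_u_le hq X)
    (summable_aux hq _ (by positivity))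

lemma summable_u (X : ℂ) : Summable (fun n : ℕ => u q X n) :=
  (summable_norm_u hq X).of_norm

lemma norm_e_le (t : ℂ) (n : ℕ) :
    ‖ee q t n‖ ≤ ‖q‖ ^ (n * (n-1)/2) * (‖t‖/(1 - ‖q‖)) ^ n := by
  have h1 : (0:ℝ) < 1 - ‖q‖ := by linarith
  rw [ee, norm_div, norm_mul, norm_pow, norm_pow, div_pow]
  rw [div_le_iff₀ (qq_norm_pos hq n)]
  calc ‖q‖ ^ (n*(n-1)/2) * ‖t‖^n
      = ‖q‖ ^ (n*(n-1)/2) * (‖t‖^n/(1-‖q‖)^n) * (1-‖q‖)^n := by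
        rw [mul_assoc, div_mul_cancel₀ _ (by positivity : ((1:ℝ)-‖q‖)^n ≠ 0)]
    _ ≤ ‖q‖ ^ (n*(n-1)/2) * (‖t‖^n/(1-‖q‖)^n) * ‖qPoch q q n‖ :=
        mul_le_mul_of_nonneg_left (qq_norm_ge hq n) (by positivity)

lemma summable_norm_e (t : ℂ) : Summable (fun n : ℕ => ‖ee q t n‖) := by
  have h1 : (0:ℝ) < 1 - ‖q‖ := by linarith
  refine Summable.of_nonneg_of_le (fun n => norm_nonneg _) (norm_e_le hq t)
    (summable_aux hq _ (by positivity))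

lemma summable_e (t : ℂ) : Summable (fun n : ℕ => ee q t n) :=
  (summable_norm_e hq t).of_norm

lemma ee_rec (t : ℂ) (n : ℕ) :
    ee q t (n+1) = ee q (t*q) (n+1) + t * ee q (t*q) n := by
  have hQ := qq_ne hq n
  have hQ1 := qq_ne hq (n+1)
  have hp := one_sub_pow_ne hq n
  simp only [ee, Nat.add_sub_cancel]
  rw [tri' n, pow_add, qPoch_succ]
  have hfac : (1:ℂ) - q * q^n = 1 - q^(n+1) := by rw [pow_succ']
  rw [hfac]
  field_simp
  ring

noncomputable def w (q X : ℂ) (n : ℕ) : ℂ :=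
  (1 - X*q) * q^(n+1) * u q (X*q^2) n / (1 - q^(n+1))

lemma u_one (X : ℂ) :
    u q X 1 = (1 - X*q) * u q (X*q^2) 0 + w q X 0 - 1 := by
  have hq1 : (1:ℂ) - q ≠ 0 := by simpa using one_sub_pow_ne hq 0
  have h1 : qPoch X q 1 = 1 - X := by simp [qPoch]
  have h2 : qPoch q q 1 = 1 - q := by simp [qPoch]
  simp only [u, w, qPoch_zero, h1, h2]
  norm_num
  field_simp
  ring

lemma u_rec (X : ℂ) (n : ℕ) :
    u q X (n+2) = (1 - X*q) * u q (X*q^2) (n+1) + w q X (n+1) - w q X n := by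
  have hQ := qq_ne hq n
  have hp1 := one_sub_pow_ne hq n
  have hp2 : (1:ℂ) - q^(n+2) ≠ 0 := by
    have := one_sub_pow_ne hq (n+1); simpa using this
  set P := qPoch (X*q^2) q n with hP
  set Q := qPoch q q n with hQd
  have e1 : qPoch X q (n+2) = (1-X) * ((1 - X*q) * P) := by
    rw [hP, qPoch_succ' X q (n+1), qPoch_succ' (X*q) q n]
    ring_nf
  have e2 : qPoch q q (n+2) = Q * (1 - q^(n+1)) * (1 - q^(n+2)) := by
    rw [hQd, qPoch_succ q q (n+1), qPoch_succ q q n, ← pow_succ' q (n+1), ← pow_succ' q n]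
  have e3 : qPoch (X*q^2) q (n+1) = P * (1 - X*q^2*q^n) := qPoch_succ _ _ _
  have e4 : qPoch q q (n+1) = Q * (1 - q^(n+1)) := by
    rw [hQd, qPoch_succ q q n, ← pow_succ' q n]
  have t2 : (n+2)*(n+2+1)/2 = n*(n+1)/2 + (n+1) + (n+2) := by
    have h1 := tri_succ (n+1); have h2 := tri_succ n
    have h3 : (n+1+1)*(n+1+2) = (n+2)*(n+2+1) := by ring
    have h4 : (n+1)*(n+1+1) = (n+1)*(n+2) := by ring
    omega
  have t1 : (n+1)*(n+1+1)/2 = n*(n+1)/2 + (n+1) := tri_succ n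
  have hD : Q * (1 - q^(n+1)) * (1 - q^(n+2)) ≠ 0 :=
    mul_ne_zero (mul_ne_zero hQ hp1) hp2
  have hD1 : Q * (1 - q^(n+1)) ≠ 0 := mul_ne_zero hQ hp1
  set D := Q * (1 - q^(n+1)) * (1 - q^(n+2)) with hDd
  have h1 : u q X (n+2) =
      (q^(n*(n+1)/2) * q^(n+1) * q^(n+2) * (1-X) * (1-X*q) * P) / D := by
    simp only [u]
    rw [e1, e2, t2, pow_add q (n*(n+1)/2 + (n+1)) (n+2), pow_add q (n*(n+1)/2) (n+1),
      div_eq_div_iff hD hD]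
    ring
  have h2 : (1 - X*q) * u q (X*q^2) (n+1) =
      ((1-X*q) * q^(n*(n+1)/2) * q^(n+1) * P * (1 - X*q^2*q^n) * (1 - q^(n+2))) / D := by
    simp only [u]
    rw [t1, pow_add q (n*(n+1)/2) (n+1), e3, e4, mul_div_assoc', div_eq_div_iff hD1 hD]
    ring
  have h3 : w q X (n+1) =
      ((1-X*q) * q^(n+2) * q^(n*(n+1)/2) * q^(n+1) * P * (1 - X*q^2*q^n)) / D := by
    simp only [w, u, show n+1+1 = n+2 from rfl]
    rw [t1, pow_add q (n*(n+1)/2) (n+1), e3, e4, mul_div_assoc', div_div,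
      div_eq_div_iff (mul_ne_zero hD1 hp2) hD]
    ring
  have h4 : w q X n =
      ((1-X*q) * q^(n+1) * q^(n*(n+1)/2) * P * (1 - q^(n+2))) / D := by
    simp only [w, u]
    rw [mul_div_assoc', div_div, div_eq_div_iff (mul_ne_zero hQ hp1) hD]
    ring
  rw [h1, h2, h3, h4, ← add_div, div_sub_div_same]
  congr 1
  ring

lemma ee_zero (t : ℂ) : ee q t 0 = 1 := by simp [ee, qPoch_zero]

lemma u_zero (X : ℂ) : u q X 0 = 1 := by simp [u, qPoch_zero]

lemma G_fe (t : ℂ) : G q t = (1 + t) * G q (t*q) := by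
  have hs1 := summable_e hq t
  have hs2 := summable_e hq (t*q)
  have hs2' : Summable (fun n => ee q (t*q) (n+1)) := by
    rwa [summable_nat_add_iff 1]
  calc G q t = ee q t 0 + ∑' n, ee q t (n+1) := Summable.tsum_eq_zero_add hs1
    _ = 1 + ∑' n, (ee q (t*q) (n+1) + t * ee q (t*q) n) := by
        rw [ee_zero hq]
        congr 1
        exact tsum_congr fun n => ee_rec hq t n
    _ = 1 + (∑' n, ee q (t*q) (n+1) + ∑' n, t * ee q (t*q) n) := by
        rw [Summable.tsum_add hs2' (hs2.mul_left t)]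
    _ = (ee q (t*q) 0 + ∑' n, ee q (t*q) (n+1)) + t * ∑' n, ee q (t*q) n := by
        rw [ee_zero hq, tsum_mul_left]
        ring
    _ = G q (t*q) + t * G q (t*q) := by
        rw [← Summable.tsum_eq_zero_add hs2]
        rfl
    _ = (1 + t) * G q (t*q) := by ring

lemma w_tendsto (X : ℂ) : Tendsto (fun n => w q X n) atTop (nhds 0) := by
  have h1 : Tendsto (fun n : ℕ => q^(n+1)) atTop (nhds 0) :=
    (tendsto_pow_atTop_nhds_zero_of_norm_lt_one hq).comp (tendsto_add_atTop_nat 1)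
  have h2 : Tendsto (fun n : ℕ => u q (X*q^2) n) atTop (nhds 0) :=
    (summable_u hq (X*q^2)).tendsto_atTop_zero
  have h3 : Tendsto (fun n : ℕ => (1:ℂ) - q^(n+1)) atTop (nhds 1) := by
    have := (tendsto_const_nhds (x := (1:ℂ)) (f := atTop)).sub h1
    simpa using this
  have := (((tendsto_const_nhds (x := (1 - X*q)) (f := atTop)).mul h1).mul h2).div h3
    one_ne_zero
  simpa [w, Pi.div_def] using this

lemma F_fe (X : ℂ) : F q X = (1 - X*q) * F q (X*q^2) := by
  have key : ∀ N : ℕ, ∑ n ∈ range (N+2), u q X n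
      = (1 - X*q) * ∑ n ∈ range (N+1), u q (X*q^2) n + w q X N := by
    intro N
    induction N with
    | zero =>
      rw [Finset.sum_range_succ, Finset.sum_range_one, Finset.sum_range_one,
        u_zero hq, u_one hq X]
      ring
    | succ m ih =>
      rw [Finset.sum_range_succ, ih, u_rec hq X m, Finset.sum_range_succ (n := m+1)]
      ring
  have hA : Tendsto (fun N => ∑ n ∈ range (N+2), u q X n) atTop (nhds (F q X)) :=
    ((summable_u hq X).hasSum.tendsto_sum_nat).comp (tendsto_add_atTop_nat 2)
  have hB : Tendsto (fun N => (1 - X*q) * ∑ n ∈ range (N+1), u q (X*q^2) n + w q X N)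
      atTop (nhds ((1 - X*q) * F q (X*q^2) + 0)) := by
    refine Tendsto.add ?_ (w_tendsto hq X)
    exact (((summable_u hq (X*q^2)).hasSum.tendsto_sum_nat).comp
      (tendsto_add_atTop_nat 1)).const_mul _
  rw [show (1 - X*q) * F q (X*q^2) = (1 - X*q) * F q (X*q^2) + 0 by ring]
  exact tendsto_nhds_unique (hA.congr key) hB

lemma F_iter (X : ℂ) (N : ℕ) :
    F q X = (∏ k ∈ range N, (1 - (X*q) * (q^2)^k)) * F q (X * q^(2*N)) := by
  induction N with
  | zero => simp
  | succ m ih =>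
    rw [ih, F_fe hq (X * q^(2*m)), Finset.prod_range_succ]
    rw [show X * q^(2*m) * q^2 = X * q^(2*(m+1)) by rw [pow_mul, pow_mul, pow_succ]; ring,
      show (1 : ℂ) - X * q^(2*m) * q = 1 - (X*q) * (q^2)^m by rw [pow_mul]; ring]
    ring

lemma G_iter (t : ℂ) (N : ℕ) :
    G q t = (∏ k ∈ range N, (1 + t * q^k)) * G q (t * q^N) := by
  induction N with
  | zero => simp
  | succ m ih =>
    rw [ih, G_fe hq (t * q^m), Finset.prod_range_succ]
    rw [show t * q^m * q = t * q^(m+1) by rw [pow_succ]; ring]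
    ring

noncomputable def MF (q : ℂ) : ℝ := ∑' n : ℕ, ‖q‖ ^ (n * (n-1)/2) * (4/(1-‖q‖)) ^ n

lemma F_near_zero (s : ℂ) (hs : ‖s‖ ≤ 1) : ‖F q s - F q 0‖ ≤ ‖s‖ * MF q := by
  have h1 : (0:ℝ) < 1 - ‖q‖ := by linarith
  have hMsum : Summable (fun n : ℕ => ‖q‖ ^ (n * (n-1)/2) * (4/(1-‖q‖)) ^ n) :=
    summable_aux hq _ (by positivity)
  have hterm : ∀ n : ℕ, ‖u q s n - u q 0 n‖ ≤
      ‖s‖ * (‖q‖ ^ (n * (n-1)/2) * (4/(1-‖q‖)) ^ n) := by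
    intro n
    have hdiff : u q s n - u q 0 n = q^(n*(n+1)/2) * (qPoch s q n - 1) / qPoch q q n := by
      simp only [u, qPoch_zero_left]
      ring
    rw [hdiff, norm_div, norm_mul, norm_pow]
    rw [div_le_iff₀ (qq_norm_pos hq n)]
    have hb : ‖qPoch s q n - 1‖ ≤ ‖s‖ * n * 2^n := poch_sub_one_le hq s hs n
    have hq1 : ‖q‖ ^ (n*(n+1)/2) ≤ ‖q‖ ^ (n*(n-1)/2) :=
      pow_le_pow_of_le_one (norm_nonneg _) hq.le (tri_le n)
    have hn4 : (n:ℝ) * 2^n ≤ 4^n := by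
      have h2 : (n:ℝ) ≤ 2^n := by
        exact_mod_cast (Nat.lt_two_pow_self (n := n)).le
      calc (n:ℝ) * 2^n ≤ 2^n * 2^n := by
            exact mul_le_mul_of_nonneg_right h2 (by positivity)
        _ = 4^n := by rw [← mul_pow]; norm_num
    calc ‖q‖ ^ (n*(n+1)/2) * ‖qPoch s q n - 1‖
        ≤ ‖q‖ ^ (n*(n-1)/2) * (‖s‖ * n * 2^n) :=
          mul_le_mul hq1 hb (norm_nonneg _) (by positivity)
      _ ≤ ‖s‖ * (‖q‖ ^ (n*(n-1)/2) * 4^n) := by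
          rw [show ‖q‖ ^ (n*(n-1)/2) * (‖s‖ * (n:ℝ) * 2^n)
              = ‖s‖ * (‖q‖ ^ (n*(n-1)/2) * ((n:ℝ) * 2^n)) by ring]
          gcongr
      _ = ‖s‖ * (‖q‖ ^ (n*(n-1)/2) * (4/(1-‖q‖))^n) * (1-‖q‖)^n := by
          rw [div_pow, mul_assoc, mul_assoc,
            div_mul_cancel₀ _ (ne_of_gt (by positivity : (0:ℝ) < (1-‖q‖)^n))]
      _ ≤ ‖s‖ * (‖q‖ ^ (n*(n-1)/2) * (4/(1-‖q‖))^n) * ‖qPoch q q n‖ :=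
          mul_le_mul_of_nonneg_left (qq_norm_ge hq n) (by positivity)
  have hsub : F q s - F q 0 = ∑' n, (u q s n - u q 0 n) :=
    (Summable.tsum_sub (summable_u hq s) (summable_u hq 0)).symm
  rw [hsub]
  have hnormsum : Summable (fun n => ‖u q s n - u q 0 n‖) :=
    Summable.of_nonneg_of_le (fun n => norm_nonneg _) hterm (hMsum.mul_left _)
  calc ‖∑' n, (u q s n - u q 0 n)‖ ≤ ∑' n, ‖u q s n - u q 0 n‖ :=
        norm_tsum_le_tsum_norm hnormsum
    _ ≤ ∑' n, ‖s‖ * (‖q‖ ^ (n * (n-1)/2) * (4/(1-‖q‖)) ^ n) :=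
        Summable.tsum_le_tsum hterm hnormsum (hMsum.mul_left _)
    _ = ‖s‖ * MF q := by rw [tsum_mul_left]; rfl

lemma G_near_zero (s : ℂ) (hs : ‖s‖ ≤ 1) :
    ‖G q s - 1‖ ≤ ‖s‖ * ((1/(1-‖q‖)) * MF q) := by
  have h1 : (0:ℝ) < 1 - ‖q‖ := by linarith
  have hMsum : Summable (fun n : ℕ => ‖q‖ ^ (n * (n-1)/2) * (4/(1-‖q‖)) ^ n) :=
    summable_aux hq _ (by positivity)
  have hs1 := summable_e hq s
  have hG : G q s - 1 = ∑' n, ee q s (n+1) := by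
    rw [G, Summable.tsum_eq_zero_add hs1, ee_zero hq]
    ring
  have hterm : ∀ n : ℕ, ‖ee q s (n+1)‖ ≤
      ‖s‖ * ((1/(1-‖q‖)) * (‖q‖ ^ (n * (n-1)/2) * (4/(1-‖q‖)) ^ n)) := by
    intro n
    calc ‖ee q s (n+1)‖ ≤ ‖q‖ ^ ((n+1) * n / 2) * (‖s‖/(1-‖q‖))^(n+1) := by
          have := norm_e_le hq s (n+1)
          simpa using this
      _ ≤ ‖s‖ * ((1/(1-‖q‖)) * (‖q‖ ^ (n * (n-1)/2) * (4/(1-‖q‖)) ^ n)) := by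
          have hq1 : ‖q‖ ^ ((n+1)*n/2) ≤ ‖q‖ ^ (n*(n-1)/2) := by
            refine pow_le_pow_of_le_one (norm_nonneg _) hq.le ?_
            rw [tri']
            omega
          have hsp : (‖s‖/(1-‖q‖))^(n+1) ≤ ‖s‖ * ((1/(1-‖q‖)) * (4/(1-‖q‖))^n) := by
            rw [pow_succ']
            have hfrac : ‖s‖/(1-‖q‖) ≤ ‖s‖ * (1/(1-‖q‖)) := by
              rw [mul_one_div]
            have hrest : (‖s‖/(1-‖q‖))^n ≤ (4/(1-‖q‖))^n := by
              have hd : ‖s‖/(1-‖q‖) ≤ 4/(1-‖q‖) := by gcongr; linarith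
              exact pow_le_pow_left₀ (by positivity) hd n
            calc ‖s‖/(1-‖q‖) * (‖s‖/(1-‖q‖))^n ≤ ‖s‖ * (1/(1-‖q‖)) * (4/(1-‖q‖))^n := by
                  refine mul_le_mul hfrac hrest (by positivity) (by positivity)
              _ = ‖s‖ * ((1/(1-‖q‖)) * (4/(1-‖q‖))^n) := by ring
          calc ‖q‖ ^ ((n+1)*n/2) * (‖s‖/(1-‖q‖))^(n+1)
              ≤ ‖q‖ ^ (n*(n-1)/2) * (‖s‖ * ((1/(1-‖q‖)) * (4/(1-‖q‖))^n)) :=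
                mul_le_mul hq1 hsp (by positivity) (by positivity)
            _ = ‖s‖ * ((1/(1-‖q‖)) * (‖q‖ ^ (n*(n-1)/2) * (4/(1-‖q‖))^n)) := by ring
  have hnorm1 : Summable (fun n => ‖ee q s (n+1)‖) := by
    have := (summable_norm_e hq s)
    rwa [← summable_nat_add_iff 1] at this
  rw [hG]
  calc ‖∑' n, ee q s (n+1)‖ ≤ ∑' n, ‖ee q s (n+1)‖ := norm_tsum_le_tsum_norm hnorm1
    _ ≤ ∑' n, ‖s‖ * ((1/(1-‖q‖)) * (‖q‖ ^ (n * (n-1)/2) * (4/(1-‖q‖)) ^ n)) :=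
        Summable.tsum_le_tsum hterm hnorm1 (by
          exact ((hMsum.mul_left _).mul_left _))
    _ = ‖s‖ * ((1/(1-‖q‖)) * MF q) := by
        rw [tsum_mul_left, tsum_mul_left]
        rfl

lemma F_lim (X : ℂ) : Tendsto (fun N => F q (X * q^(2*N))) atTop (nhds (F q 0)) := by
  have hto : Tendsto (fun N : ℕ => X * q^(2*N)) atTop (nhds 0) := by
    have h2 : ‖q^2‖ < 1 := by
      rw [norm_pow]
      exact pow_lt_one₀ (norm_nonneg _) hq (by norm_num)
    have := (tendsto_pow_atTop_nhds_zero_of_norm_lt_one h2).const_mul X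
    simpa [← pow_mul] using this
  rw [← tendsto_sub_nhds_zero_iff]
  have hnorm : Tendsto (fun N : ℕ => ‖X * q^(2*N)‖ * MF q) atTop (nhds 0) := by
    have := (hto.norm).mul_const (MF q)
    simpa using this
  refine squeeze_zero_norm' ?_ hnorm
  have hev : ∀ᶠ N : ℕ in atTop, ‖X * q^(2*N)‖ ≤ 1 := by
    have h := (by simpa using hto.norm :
      Tendsto (fun N : ℕ => ‖X * q^(2*N)‖) atTop (nhds 0))
    exact h.eventually_le_const (by norm_num : (0:ℝ) < 1)
  filter_upwards [hev] with N hN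
  exact F_near_zero hq _ hN

lemma G_lim (t : ℂ) : Tendsto (fun N => G q (t * q^N)) atTop (nhds 1) := by
  have hto : Tendsto (fun N : ℕ => t * q^N) atTop (nhds 0) := by
    simpa using (tendsto_pow_atTop_nhds_zero_of_norm_lt_one hq).const_mul t
  rw [← tendsto_sub_nhds_zero_iff]
  have hnorm : Tendsto (fun N : ℕ => ‖t * q^N‖ * ((1/(1-‖q‖)) * MF q)) atTop (nhds 0) := by
    have := (hto.norm).mul_const ((1/(1-‖q‖)) * MF q)
    simpa using this
  refine squeeze_zero_norm' ?_ hnorm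
  have hev : ∀ᶠ N : ℕ in atTop, ‖t * q^N‖ ≤ 1 := by
    have h := (by simpa using hto.norm :
      Tendsto (fun N : ℕ => ‖t * q^N‖) atTop (nhds 0))
    exact h.eventually_le_const (by norm_num : (0:ℝ) < 1)
  filter_upwards [hev] with N hN
  exact G_near_zero hq _ hN

end

lemma multipliable_aux {a q : ℂ} (hq : ‖q‖ < 1) :
    Multipliable (fun k : ℕ => 1 - a * q^k) := by
  by_cases hz : ∃ k₀, 1 - a * q^k₀ = 0
  · obtain ⟨k₀, hk₀⟩ := hz
    refine ⟨0, ?_⟩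
    rw [HasProd]
    have : ∀ᶠ s : Finset ℕ in atTop, (∏ k ∈ s, (1 - a * q^k)) = 0 := by
      filter_upwards [Filter.eventually_ge_atTop ({k₀} : Finset ℕ)] with s hs
      exact Finset.prod_eq_zero (hs (Finset.mem_singleton_self k₀)) hk₀
    exact Tendsto.congr' (by filter_upwards [this] with s hs; exact hs.symm)
      tendsto_const_nhds
  · push_neg at hz
    have hlog : Summable (fun k : ℕ => Complex.log (1 - a * q^k)) := by
      have hev : ∀ᶠ k : ℕ in atTop, ‖Complex.log (1 - a * q^k)‖ ≤ (3/2) * ‖a‖ * ‖q‖^k := by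
        have hto : Tendsto (fun k : ℕ => ‖a‖ * ‖q‖^k) atTop (nhds 0) := by
          simpa using (tendsto_pow_atTop_nhds_zero_of_lt_one (norm_nonneg q) hq).const_mul ‖a‖
        filter_upwards [hto.eventually_le_const (by norm_num : (0:ℝ) < 1/2)] with k hk
        have hn : ‖-(a * q^k)‖ ≤ 1/2 := by
          rw [norm_neg, norm_mul, norm_pow]; exact hk
        have := Complex.norm_log_one_add_half_le_self hn
        rw [show (1:ℂ) + -(a * q^k) = 1 - a * q^k by ring] at this
        calc ‖Complex.log (1 - a*q^k)‖ ≤ 3/2 * ‖-(a * q^k)‖ := this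
          _ = (3/2) * ‖a‖ * ‖q‖^k := by
              rw [norm_neg, norm_mul, norm_pow]; ring
      rw [← Nat.cofinite_eq_atTop] at hev
      refine Summable.of_norm_bounded_eventually ?_ hev
      simpa [mul_assoc] using
        ((summable_geometric_of_lt_one (norm_nonneg q) hq).mul_left ((3/2) * ‖a‖))
    exact Complex.multipliable_of_summable_log hlog

lemma qPochInf_eq_lim {a q : ℂ} (hq : ‖q‖ < 1) :
    Tendsto (fun N => ∏ k ∈ range N, (1 - a * q^k)) atTop (nhds (qPochInf a q)) :=
  (multipliable_aux hq).hasProd.tendsto_prod_nat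

section
variable {q : ℂ} (hq : ‖q‖ < 1)
include hq

lemma F_eq_prod_F0 (X : ℂ) : F q X = qPochInf (X*q) (q^2) * F q 0 := by
  have hq2 : ‖q^2‖ < 1 := by
    rw [norm_pow]
    exact pow_lt_one₀ (norm_nonneg _) hq (by norm_num)
  have h1 : Tendsto (fun N => (∏ k ∈ range N, (1 - (X*q) * (q^2)^k)) * F q (X * q^(2*N)))
      atTop (nhds (qPochInf (X*q) (q^2) * F q 0)) :=
    (qPochInf_eq_lim hq2).mul (F_lim hq X)
  have h2 : Tendsto (fun _ : ℕ => F q X) atTop (nhds (F q X)) := tendsto_const_nhds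
  exact tendsto_nhds_unique (h2.congr fun N => F_iter hq X N) h1

lemma G_eq_prod (t : ℂ) : G q t = qPochInf (-t) q * 1 := by
  have h1 : Tendsto (fun N => (∏ k ∈ range N, (1 + t * q^k)) * G q (t * q^N))
      atTop (nhds (qPochInf (-t) q * 1)) := by
    refine Tendsto.mul ?_ (G_lim hq t)
    have := qPochInf_eq_lim (a := -t) hq
    refine this.congr fun N => ?_
    refine Finset.prod_congr rfl fun k _ => ?_
    ring
  exact tendsto_nhds_unique ((tendsto_const_nhds (x := G q t)).congr
    fun N => G_iter hq t N) h1

lemma F0_eq : F q 0 = qPochInf (-q) q := by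
  have h1 : F q 0 = G q q := by
    refine tsum_congr fun n => ?_
    simp only [u, ee, qPoch_zero_left, mul_one]
    rw [← pow_add, ← tri' n]
    have h3 : (n+1)*n/2 = n*(n+1)/2 := by rw [Nat.mul_comm]
    rw [h3]
  rw [h1, G_eq_prod hq q, mul_one]

end

end RF

theorem rogers_fine_type_identity (X q : ℂ) (hq : ‖q‖ < 1) :
    Summable (fun n : ℕ => ‖q ^ (n * (n + 1) / 2) * qPoch X q n / qPoch q q n‖) ∧
    (∑' n : ℕ, q ^ (n * (n + 1) / 2) * qPoch X q n / qPoch q q n) =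
      qPochInf (X * q) (q ^ 2) * qPochInf (-q) q := by
  constructor
  · exact RF.summable_norm_u hq X
  · have h1 : (∑' n : ℕ, q ^ (n * (n + 1) / 2) * qPoch X q n / qPoch q q n) = RF.F q X := rfl
    rw [h1, RF.F_eq_prod_F0 hq X, RF.F0_eq hq]
end

section
/- For every X ∈ ℂ and every q ∈ ℂ with |q| < 1, the series ∑_{n≥0} q^{n(n+3)/2}·(X;q)_n/(q;q)_n converges absolutely and satisfies X·∑_{n≥0} q^{n(n+3)/2}·(X;q)_n/(q;q)_n = (−q;q)_∞·[(Xq;q²)_∞ − (X;q²)_∞]. -/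
open scoped BigOperators
open Filter
open scoped Topology

lemma qPoch_succ (a q : ℂ) (n : ℕ) : qPoch a q (n+1) = qPoch a q n * (1 - a * q ^ n) :=
  Finset.prod_range_succ _ _

lemma qPoch_succ' (a q : ℂ) (n : ℕ) : qPoch a q (n+1) = (1 - a) * qPoch (a*q) q n := by
  rw [qPoch, Finset.prod_range_succ']
  simp only [pow_zero, mul_one, pow_succ']
  rw [mul_comm, qPoch]
  simp [mul_assoc]

lemma qPoch_zero_left (q : ℂ) (n : ℕ) : qPoch 0 q n = 1 := by
  simp [qPoch]

-- exponent arithmetic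
lemma two_dvd_B (n : ℕ) : 2 ∣ n*(n+3) := by
  rcases Nat.even_or_odd n with h | h
  · exact Dvd.dvd.mul_right h.two_dvd _
  · obtain ⟨m, rfl⟩ := h
    exact Dvd.dvd.mul_left (by omega : (2:ℕ) ∣ 2*m+1 + 3) _

lemma expA (n : ℕ) : (n+1)*((n+1)+1)/2 = n*(n+3)/2 + 1 := by
  obtain ⟨k, hk⟩ := two_dvd_B n
  have hkey : (n+1)*((n+1)+1) = n*(n+3) + 2 := by ring
  rw [hkey, hk]; omega

lemma expB (n : ℕ) : (n+1)*((n+1)+3)/2 = n*(n+3)/2 + (n + 2) := by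
  obtain ⟨k, hk⟩ := two_dvd_B n
  have hkey : (n+1)*((n+1)+3) = n*(n+3) + 2*(n+2) := by ring
  rw [hkey, hk]; omega

lemma expC (n : ℕ) : (n+1)*((n+1)+1)/2 = n*(n+1)/2 + (n+1) := by
  obtain ⟨k, hk⟩ := (Nat.even_mul_succ_self n).two_dvd
  have hkey : (n+1)*((n+1)+1) = n*(n+1) + 2*(n+1) := by ring
  rw [hkey, hk]; omega

lemma exp_ge_self_A (n : ℕ) : n ≤ n*(n+1)/2 := by
  rw [Nat.le_div_iff_mul_le (by norm_num)]
  rcases Nat.eq_zero_or_pos n with h | h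
  · simp [h]
  · exact Nat.mul_le_mul_left _ (by omega)

lemma exp_ge_self_B (n : ℕ) : n ≤ n*(n+3)/2 := by
  calc n ≤ n*(n+1)/2 := exp_ge_self_A n
  _ ≤ n*(n+3)/2 := Nat.div_le_div_right (Nat.mul_le_mul_left _ (by omega))

-- ## Stage 2: bounds and multipliability

lemma norm_qPoch_le (a q : ℂ) {R : ℝ} (hR : ‖a‖ ≤ R) (hq : ‖q‖ < 1) (n : ℕ) :
    ‖qPoch a q n‖ ≤ Real.exp (R / (1 - ‖q‖)) := by
  have h0q : (0:ℝ) ≤ ‖q‖ := norm_nonneg q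
  have hR0 : (0:ℝ) ≤ R := le_trans (norm_nonneg a) hR
  calc ‖qPoch a q n‖ = ∏ k ∈ Finset.range n, ‖1 - a*q^k‖ := by
        rw [qPoch]; exact norm_prod _ _
    _ ≤ ∏ k ∈ Finset.range n, Real.exp (R * ‖q‖^k) := by
        apply Finset.prod_le_prod (fun k _ => norm_nonneg _)
        intro k _
        have h1 : ‖1 - a*q^k‖ ≤ 1 + R * ‖q‖^k := by
          calc ‖1 - a*q^k‖ ≤ ‖(1:ℂ)‖ + ‖a*q^k‖ := norm_sub_le _ _
            _ ≤ 1 + R * ‖q‖^k := by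
                rw [norm_one, norm_mul, norm_pow]
                gcongr
        calc ‖1 - a*q^k‖ ≤ R * ‖q‖^k + 1 := by linarith
          _ ≤ Real.exp (R * ‖q‖^k) := Real.add_one_le_exp _
    _ = Real.exp (∑ k ∈ Finset.range n, R * ‖q‖^k) := (Real.exp_sum _ _).symm
    _ ≤ Real.exp (R / (1 - ‖q‖)) := by
        apply Real.exp_le_exp.2
        rw [← Finset.mul_sum, div_eq_mul_inv]
        apply mul_le_mul_of_nonneg_left _ hR0
        calc ∑ k ∈ Finset.range n, ‖q‖^k ≤ ∑' k : ℕ, ‖q‖^k :=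
              Summable.sum_le_tsum _ (fun k _ => pow_nonneg h0q k)
                (summable_geometric_of_lt_one h0q hq)
          _ = (1 - ‖q‖)⁻¹ := tsum_geometric_of_lt_one h0q hq

lemma one_sub_q_pow_ne (q : ℂ) (hq : ‖q‖ < 1) (k : ℕ) : 1 - q * q^k ≠ 0 := by
  intro h
  have h1 : q * q^k = 1 := by linear_combination -h
  have : ‖q * q^k‖ < 1 := by
    rw [norm_mul, norm_pow]
    calc ‖q‖ * ‖q‖^k ≤ ‖q‖ * 1 :=
          mul_le_mul_of_nonneg_left (pow_le_one₀ (norm_nonneg q) hq.le) (norm_nonneg q)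
      _ < 1 := by rwa [mul_one]
  rw [h1, norm_one] at this
  exact lt_irrefl _ this

lemma qPoch_qq_ne (q : ℂ) (hq : ‖q‖ < 1) (n : ℕ) : qPoch q q n ≠ 0 := by
  rw [qPoch]
  exact Finset.prod_ne_zero_iff.2 (fun k _ => one_sub_q_pow_ne q hq k)

lemma exists_small (a q : ℂ) (hq : ‖q‖ < 1) : ∃ k : ℕ, ‖a‖ * ‖q‖^k ≤ 1/2 := by
  have h := (tendsto_pow_atTop_nhds_zero_of_lt_one (norm_nonneg q) hq).const_mul ‖a‖
  rw [mul_zero] at h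
  have := h.eventually_le_const (show (0:ℝ) < 1/2 by norm_num)
  exact (this.exists)

lemma summable_log_aux (a q : ℂ) (hq : ‖q‖ < 1) (k : ℕ) (hk : ‖a‖ * ‖q‖^k ≤ 1/2) :
    Summable (fun n : ℕ => Complex.log (1 - a * q^(n+k))) := by
  have h0q : (0:ℝ) ≤ ‖q‖ := norm_nonneg q
  have hb : ∀ n : ℕ, ‖a * q^(n+k)‖ ≤ 1/2 * ‖q‖^n := by
    intro n
    rw [norm_mul, norm_pow, pow_add]
    calc ‖a‖ * (‖q‖^n * ‖q‖^k) = (‖a‖*‖q‖^k) * ‖q‖^n := by ring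
      _ ≤ 1/2 * ‖q‖^n := mul_le_mul_of_nonneg_right hk (pow_nonneg h0q n)
  apply Summable.of_norm_bounded (g := fun n => 3/2 * (1/2 * ‖q‖^n))
    (((summable_geometric_of_lt_one h0q hq).mul_left (1/2)).mul_left (3/2))
  intro n
  have hhalf : ‖-(a * q^(n+k))‖ ≤ 1/2 := by
    rw [norm_neg]
    calc ‖a * q^(n+k)‖ ≤ 1/2 * ‖q‖^n := hb n
      _ ≤ 1/2 * 1 := by gcongr; exact pow_le_one₀ h0q hq.le
      _ = 1/2 := by norm_num
  have h3 := Complex.norm_log_one_add_half_le_self hhalf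
  rw [show (1:ℂ) + -(a*q^(n+k)) = 1 - a*q^(n+k) by ring, norm_neg] at h3
  have h4 := hb n
  linarith

lemma multipliable_qPochInf (a q : ℂ) (hq : ‖q‖ < 1) :
    Multipliable (fun n : ℕ => 1 - a * q ^ n) := by
  obtain ⟨k, hk⟩ := exists_small a q hq
  apply Multipliable.comp_nat_add (k := k)
  have hne : ∀ n : ℕ, (1 - a * q^(n+k)) ≠ 0 := by
    intro n h
    have h1 : ‖a * q^(n+k)‖ ≤ 1/2 := by
      rw [norm_mul, norm_pow, pow_add, ← mul_assoc]
      calc ‖a‖ * ‖q‖^n * ‖q‖^k = (‖a‖ * ‖q‖^k) * ‖q‖^n := by ring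
        _ ≤ (1/2) * 1 := by
            apply mul_le_mul hk (pow_le_one₀ (norm_nonneg q) hq.le)
              (pow_nonneg (norm_nonneg q) n) (by norm_num)
        _ = 1/2 := by norm_num
    have h2 : a * q^(n+k) = 1 := by linear_combination -h
    rw [h2, norm_one] at h1
    norm_num at h1
  exact Complex.multipliable_of_summable_log (summable_log_aux a q hq k hk)

lemma tendsto_qPoch (a q : ℂ) (hq : ‖q‖ < 1) :
    Filter.Tendsto (fun n => qPoch a q n) atTop (𝓝 (qPochInf a q)) := by
  have := (multipliable_qPochInf a q hq).hasProd.tendsto_prod_nat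
  simpa only [qPoch, qPochInf] using this

-- ## Stage 3: nonvanishing, lower bound, summability

lemma qPochInf_qq_ne (q : ℂ) (hq : ‖q‖ < 1) : qPochInf q q ≠ 0 := by
  obtain ⟨k, hk⟩ := exists_small q q hq
  have hsum : Summable (fun n : ℕ => Complex.log (1 - q * q^n)) :=
    (summable_nat_add_iff k).1 (summable_log_aux q q hq k hk)
  have this : Complex.exp (∑' n : ℕ, Complex.log (1 - q*q^n)) = ∏' n : ℕ, (1 - q*q^n) :=
    Complex.cexp_tsum_eq_tprod (fun n => one_sub_q_pow_ne q hq n) hsum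
  rw [qPochInf, ← this]
  exact Complex.exp_ne_zero _

lemma denom_lower (q : ℂ) (hq : ‖q‖ < 1) : ∃ c > 0, ∀ n, c ≤ ‖qPoch q q n‖ := by
  have hP : 0 < ‖qPochInf q q‖ := norm_pos_iff.2 (qPochInf_qq_ne q hq)
  have ht : Filter.Tendsto (fun n => ‖qPoch q q n‖) atTop (𝓝 ‖qPochInf q q‖) :=
    (tendsto_qPoch q q hq).norm
  have hev : ∀ᶠ n in atTop, ‖qPochInf q q‖/2 ≤ ‖qPoch q q n‖ :=
    ht.eventually_const_le (by linarith)
  obtain ⟨N, hN⟩ := eventually_atTop.1 hev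
  refine ⟨min ((Finset.range (N+1)).inf' ⟨0, by simp⟩ (fun i => ‖qPoch q q i‖))
    (‖qPochInf q q‖/2), lt_min ?_ (by linarith), ?_⟩
  · refine (Finset.lt_inf'_iff _).2 ?_
    intro i _
    exact norm_pos_iff.2 (qPoch_qq_ne q hq i)
  · intro n
    rcases le_or_gt n N with h | h
    · exact le_trans (min_le_left _ _) (Finset.inf'_le _ (Finset.mem_range.2 (by omega)))
    · exact le_trans (min_le_right _ _) (hN n (by omega))

lemma norm_term_le (q : ℂ) (hq : ‖q‖ < 1) {c C : ℝ} (hc : 0 < c)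
    (hcl : ∀ n, c ≤ ‖qPoch q q n‖) (g : ℕ → ℂ) (hg : ∀ n, ‖g n‖ ≤ C)
    (e : ℕ → ℕ) (he : ∀ n, n ≤ e n) (n : ℕ) :
    ‖q ^ (e n) * g n / qPoch q q n‖ ≤ ‖q‖^n * (C / c) := by
  have hC : (0:ℝ) ≤ C := le_trans (norm_nonneg _) (hg 0)
  rw [norm_div, norm_mul, norm_pow]
  have h1 : ‖q‖^(e n) ≤ ‖q‖^n := pow_le_pow_of_le_one (norm_nonneg q) hq.le (he n)
  calc ‖q‖ ^ (e n) * ‖g n‖ / ‖qPoch q q n‖ ≤ ‖q‖ ^ n * C / c :=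
        div_le_div₀ (by positivity)
          (mul_le_mul h1 (hg n) (norm_nonneg _) (pow_nonneg (norm_nonneg q) n)) hc (hcl n)
    _ = ‖q‖^n * (C / c) := by ring

lemma summable_norm_gen (q : ℂ) (hq : ‖q‖ < 1) {c C : ℝ} (hc : 0 < c)
    (hcl : ∀ n, c ≤ ‖qPoch q q n‖) (g : ℕ → ℂ) (hg : ∀ n, ‖g n‖ ≤ C)
    (e : ℕ → ℕ) (he : ∀ n, n ≤ e n) :
    Summable (fun n : ℕ => ‖q ^ (e n) * g n / qPoch q q n‖) := by
  apply Summable.of_nonneg_of_le (fun n => norm_nonneg _)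
    (norm_term_le q hq hc hcl g hg e he)
  exact (summable_geometric_of_lt_one (norm_nonneg q) hq).mul_right _

-- ## Stage 4: the series and functional equations

noncomputable def Sq (q a : ℂ) : ℂ := ∑' n : ℕ, q ^ (n*(n+1)/2) * qPoch a q n / qPoch q q n
noncomputable def Uq (q a : ℂ) : ℂ := ∑' n : ℕ, q ^ (n*(n+3)/2) * qPoch a q n / qPoch q q n
noncomputable def Eq1 (q z : ℂ) : ℂ := ∑' n : ℕ, q ^ (n*(n+1)/2) * z^n / qPoch q q n

lemma summable_S (q a : ℂ) (hq : ‖q‖ < 1) :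
    Summable (fun n : ℕ => q ^ (n*(n+1)/2) * qPoch a q n / qPoch q q n) := by
  obtain ⟨c, hc, hcl⟩ := denom_lower q hq
  exact Summable.of_norm (summable_norm_gen q hq hc hcl (qPoch a q)
    (norm_qPoch_le a q le_rfl hq) _ exp_ge_self_A)

lemma summable_U (q a : ℂ) (hq : ‖q‖ < 1) :
    Summable (fun n : ℕ => q ^ (n*(n+3)/2) * qPoch a q n / qPoch q q n) := by
  obtain ⟨c, hc, hcl⟩ := denom_lower q hq
  exact Summable.of_norm (summable_norm_gen q hq hc hcl (qPoch a q)
    (norm_qPoch_le a q le_rfl hq) _ exp_ge_self_B)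

lemma summable_E (q z : ℂ) (hq : ‖q‖ < 1) (hz : ‖z‖ ≤ 1) :
    Summable (fun n : ℕ => q ^ (n*(n+1)/2) * z^n / qPoch q q n) := by
  obtain ⟨c, hc, hcl⟩ := denom_lower q hq
  refine Summable.of_norm (summable_norm_gen q hq (C := 1) hc hcl (fun n => z^n)
    (fun n => ?_) _ exp_ge_self_A)
  rw [norm_pow]
  exact pow_le_one₀ (norm_nonneg z) hz

lemma funcII (q a : ℂ) (hq : ‖q‖ < 1) :
    Sq q a = Sq q (a*q) - a*q * Uq q (a*q) := by
  have hs1 := summable_S q a hq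
  have hs2 := summable_S q (a*q) hq
  have hd : ∀ n, qPoch q q n ≠ 0 := qPoch_qq_ne q hq
  have hne : ∀ n : ℕ, (1 : ℂ) - q*q^n ≠ 0 := one_sub_q_pow_ne q hq
  have key : ∀ n : ℕ,
      q ^ ((n+1)*((n+1)+1)/2) * qPoch a q (n+1) / qPoch q q (n+1)
        - q ^ ((n+1)*((n+1)+1)/2) * qPoch (a*q) q (n+1) / qPoch q q (n+1)
      = -(a*q) * (q ^ (n*(n+3)/2) * qPoch (a*q) q n / qPoch q q n) := by
    intro n
    rw [expA n, qPoch_succ' a q n, qPoch_succ (a*q) q n, qPoch_succ q q n, pow_succ]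
    field_simp [hd n, hne n]
    ring
  have hdiff : Sq q a - Sq q (a*q) = -(a*q) * Uq q (a*q) := by
    rw [Sq, Sq, ← Summable.tsum_sub hs1 hs2, Summable.tsum_eq_zero_add (hs1.sub hs2)]
    have h0 : q ^ (0*(0+1)/2) * qPoch a q 0 / qPoch q q 0
        - q ^ (0*(0+1)/2) * qPoch (a*q) q 0 / qPoch q q 0 = 0 := by
      simp [qPoch]
    rw [h0, zero_add, tsum_congr (fun n => key n), tsum_mul_left, Uq]
  linear_combination hdiff

lemma funcI (q a : ℂ) (hq : ‖q‖ < 1) :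
    Uq q a = Sq q a - (1-a)*q * Uq q (a*q) := by
  have hu1 := summable_U q a hq
  have hs1 := summable_S q a hq
  have hd : ∀ n, qPoch q q n ≠ 0 := qPoch_qq_ne q hq
  have hne : ∀ n : ℕ, (1 : ℂ) - q*q^n ≠ 0 := one_sub_q_pow_ne q hq
  have key : ∀ n : ℕ,
      q ^ ((n+1)*((n+1)+3)/2) * qPoch a q (n+1) / qPoch q q (n+1)
        - q ^ ((n+1)*((n+1)+1)/2) * qPoch a q (n+1) / qPoch q q (n+1)
      = -((1-a)*q) * (q ^ (n*(n+3)/2) * qPoch (a*q) q n / qPoch q q n) := by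
    intro n
    rw [expB n, expA n, qPoch_succ' a q n, qPoch_succ q q n, pow_add, pow_add, pow_succ]
    field_simp [hd n, hne n]
    linear_combination (a*q - q) * q ^ (n * (n + 3) / 2) * qPoch (q * a) q n *
      mul_inv_cancel₀ (hne n)
  have hdiff : Uq q a - Sq q a = -((1-a)*q) * Uq q (a*q) := by
    rw [Uq, Sq, ← Summable.tsum_sub hu1 hs1, Summable.tsum_eq_zero_add (hu1.sub hs1)]
    have h0 : q ^ (0*(0+3)/2) * qPoch a q 0 / qPoch q q 0
        - q ^ (0*(0+1)/2) * qPoch a q 0 / qPoch q q 0 = 0 := by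
      simp [qPoch]
    rw [h0, zero_add, tsum_congr (fun n => key n), tsum_mul_left, Uq]
  linear_combination hdiff

lemma funcE (q z : ℂ) (hq : ‖q‖ < 1) (hz : ‖z‖ ≤ 1) (hzq : ‖z*q‖ ≤ 1) :
    Eq1 q z = (1 + z*q) * Eq1 q (z*q) := by
  have he1 := summable_E q z hq hz
  have he2 := summable_E q (z*q) hq hzq
  have hd : ∀ n, qPoch q q n ≠ 0 := qPoch_qq_ne q hq
  have hne : ∀ n : ℕ, (1 : ℂ) - q*q^n ≠ 0 := one_sub_q_pow_ne q hq
  have key : ∀ n : ℕ,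
      q ^ ((n+1)*((n+1)+1)/2) * z^(n+1) / qPoch q q (n+1)
        - q ^ ((n+1)*((n+1)+1)/2) * (z*q)^(n+1) / qPoch q q (n+1)
      = z*q * (q ^ (n*(n+1)/2) * (z*q)^n / qPoch q q n) := by
    intro n
    rw [expC n, qPoch_succ q q n, pow_add, pow_succ z, pow_succ (z*q), pow_succ q n,
      mul_pow]
    field_simp [hd n, hne n]
    linear_combination q * q ^ n * q ^ (n * (n + 1) / 2) * z * z ^ n * mul_inv_cancel₀ (hne n)
  have hdiff : Eq1 q z - Eq1 q (z*q) = z*q * Eq1 q (z*q) := by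
    conv_lhs => rw [Eq1, Eq1]
    rw [← Summable.tsum_sub he1 he2, Summable.tsum_eq_zero_add (he1.sub he2)]
    have h0 : q ^ (0*(0+1)/2) * z^0 / qPoch q q 0
        - q ^ (0*(0+1)/2) * (z*q)^0 / qPoch q q 0 = 0 := by
      simp [qPoch]
    rw [h0, zero_add, tsum_congr (fun n => key n), tsum_mul_left, Eq1]
  linear_combination hdiff

-- ## Stage 5: iterations and limits

lemma norm_qq_lt (q : ℂ) (hq : ‖q‖ < 1) : ‖q*q‖ < 1 := by
  rw [norm_mul]
  nlinarith [norm_nonneg q]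

lemma funcR (q a : ℂ) (hq : ‖q‖ < 1) : Sq q a = (1 - a*q) * Sq q (a*q*q) := by
  have h1 := funcII q a hq
  have h2 := funcI q (a*q) hq
  have h3 := funcII q (a*q) hq
  linear_combination h1 - (a*q)*h2 + (1-a*q)*h3

lemma main_alg (q X : ℂ) (hq : ‖q‖ < 1) :
    X * Uq q X = Sq q X - (1-X) * Sq q (X*q) := by
  have h1 := funcI q X hq
  have h2 := funcII q X hq
  linear_combination X*h1 - (1-X)*h2

lemma iterS (q a : ℂ) (hq : ‖q‖ < 1) (N : ℕ) :
    Sq q a = qPoch (a*q) (q*q) N * Sq q (a * (q*q)^N) := by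
  induction N with
  | zero => simp [qPoch]
  | succ N ih =>
    have hR := funcR q (a*(q*q)^N) hq
    rw [show a*(q*q)^N*q*q = a*(q*q)^(N+1) by ring] at hR
    rw [qPoch_succ]
    calc Sq q a = qPoch (a*q) (q*q) N * Sq q (a*(q*q)^N) := ih
      _ = qPoch (a*q) (q*q) N * ((1 - a*(q*q)^N*q) * Sq q (a*(q*q)^(N+1))) := by rw [← hR]
      _ = qPoch (a*q) (q*q) N * (1 - (a*q)*(q*q)^N) * Sq q (a*(q*q)^(N+1)) := by ring

lemma iterE (q : ℂ) (hq : ‖q‖ < 1) (N : ℕ) :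
    Eq1 q 1 = qPoch (-q) q N * Eq1 q (q^N) := by
  induction N with
  | zero => simp [qPoch]
  | succ N ih =>
    have hE := funcE q (q^N) hq
      (by rw [norm_pow]; exact pow_le_one₀ (norm_nonneg q) hq.le)
      (by rw [← pow_succ, norm_pow]; exact pow_le_one₀ (norm_nonneg q) hq.le)
    rw [show q^N*q = q^(N+1) from (pow_succ q N).symm] at hE
    rw [qPoch_succ]
    calc Eq1 q 1 = qPoch (-q) q N * Eq1 q (q^N) := ih
      _ = qPoch (-q) q N * ((1 + q^N*q) * Eq1 q (q^(N+1))) := by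
          rw [← pow_succ, ← hE]
      _ = qPoch (-q) q N * (1 - (-q)*q^N) * Eq1 q (q^(N+1)) := by ring

lemma cont_term (q : ℂ) (n : ℕ) (e : ℕ) :
    Continuous (fun b : ℂ => q ^ e * qPoch b q n / qPoch q q n) := by
  apply Continuous.div_const
  apply continuous_const.mul
  unfold qPoch
  exact continuous_finset_prod _ (fun k _ => by continuity)

lemma tendsto_S_zero (q a : ℂ) (hq : ‖q‖ < 1) :
    Filter.Tendsto (fun N => Sq q (a * (q*q)^N)) atTop (𝓝 (Sq q 0)) := by
  obtain ⟨c, hc, hcl⟩ := denom_lower q hq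
  have hqq := norm_qq_lt q hq
  have htz : Filter.Tendsto (fun N : ℕ => a * (q*q)^N) atTop (𝓝 0) := by
    have := (tendsto_pow_atTop_nhds_zero_of_norm_lt_one hqq).const_mul a
    simpa using this
  have main := tendsto_tsum_of_dominated_convergence
    (f := fun (N : ℕ) (n : ℕ) => q ^ (n*(n+1)/2) * qPoch (a*(q*q)^N) q n / qPoch q q n)
    (g := fun n : ℕ => q ^ (n*(n+1)/2) * qPoch 0 q n / qPoch q q n)
    (bound := fun n : ℕ => ‖q‖^n * (Real.exp (‖a‖/(1-‖q‖)) / c))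
    (((summable_geometric_of_lt_one (norm_nonneg q) hq).mul_right _))
    (fun n => ((cont_term q n _).tendsto 0).comp htz)
    (by
      filter_upwards with N n
      apply norm_term_le q hq hc hcl (qPoch (a*(q*q)^N) q) _ _ exp_ge_self_A
      intro m
      apply norm_qPoch_le _ q _ hq
      rw [norm_mul]
      calc ‖a‖ * ‖(q*q)^N‖ ≤ ‖a‖ * 1 := by
            apply mul_le_mul_of_nonneg_left _ (norm_nonneg a)
            rw [norm_pow]
            exact pow_le_one₀ (norm_nonneg _) hqq.le
        _ = ‖a‖ := mul_one _)
  exact main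

lemma tendsto_E_zero (q : ℂ) (hq : ‖q‖ < 1) :
    Filter.Tendsto (fun N => Eq1 q (q^N)) atTop (𝓝 (Eq1 q 0)) := by
  obtain ⟨c, hc, hcl⟩ := denom_lower q hq
  have htz : Filter.Tendsto (fun N : ℕ => q^N) atTop (𝓝 0) :=
    tendsto_pow_atTop_nhds_zero_of_norm_lt_one hq
  have main := tendsto_tsum_of_dominated_convergence
    (f := fun (N : ℕ) (n : ℕ) => q ^ (n*(n+1)/2) * (q^N)^n / qPoch q q n)
    (g := fun n : ℕ => q ^ (n*(n+1)/2) * (0:ℂ)^n / qPoch q q n)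
    (bound := fun n : ℕ => ‖q‖^n * (1 / c))
    (((summable_geometric_of_lt_one (norm_nonneg q) hq).mul_right _))
    (fun n => by
      have hcont : Continuous (fun b : ℂ => q ^ (n*(n+1)/2) * b^n / qPoch q q n) := by
        apply Continuous.div_const
        exact continuous_const.mul (continuous_pow n)
      exact (hcont.tendsto 0).comp htz)
    (by
      filter_upwards with N n
      apply norm_term_le q hq hc hcl (fun m => (q^N)^m) _ _ exp_ge_self_A
      intro m
      rw [norm_pow, norm_pow]
      exact pow_le_one₀ (pow_nonneg (norm_nonneg q) N)
        (pow_le_one₀ (norm_nonneg q) hq.le))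
  exact main

lemma Sq_zero (q : ℂ) : Sq q 0 = Eq1 q 1 := by
  rw [Sq, Eq1]
  exact tsum_congr (fun n => by rw [qPoch_zero_left, one_pow])

lemma Eq1_zero (q : ℂ) : Eq1 q 0 = 1 := by
  rw [Eq1]
  rw [tsum_eq_single 0 (fun n hn => by rw [zero_pow hn, mul_zero, zero_div])]
  simp [qPoch]

lemma euler (q : ℂ) (hq : ‖q‖ < 1) : Eq1 q 1 = qPochInf (-q) q := by
  have h1 : Filter.Tendsto (fun N => qPoch (-q) q N * Eq1 q (q^N)) atTop
      (𝓝 (qPochInf (-q) q * Eq1 q 0)) :=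
    (tendsto_qPoch (-q) q hq).mul (tendsto_E_zero q hq)
  have h2 : Filter.Tendsto (fun _ : ℕ => Eq1 q 1) atTop (𝓝 (Eq1 q 1)) :=
    tendsto_const_nhds
  have h3 := tendsto_nhds_unique (h2.congr (fun N => iterE q hq N)) h1
  rw [h3, Eq1_zero, mul_one]

lemma lebesgue (q a : ℂ) (hq : ‖q‖ < 1) :
    Sq q a = qPochInf (a*q) (q*q) * qPochInf (-q) q := by
  have hqq := norm_qq_lt q hq
  have h1 : Filter.Tendsto (fun N => qPoch (a*q) (q*q) N * Sq q (a*(q*q)^N)) atTop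
      (𝓝 (qPochInf (a*q) (q*q) * Sq q 0)) :=
    (tendsto_qPoch (a*q) (q*q) hqq).mul (tendsto_S_zero q a hq)
  have h2 : Filter.Tendsto (fun _ : ℕ => Sq q a) atTop (𝓝 (Sq q a)) := tendsto_const_nhds
  have h3 := tendsto_nhds_unique (h2.congr (fun N => iterS q a hq N)) h1
  rw [h3, Sq_zero, euler q hq]

-- ## Stage 6: final assembly

lemma pochinf_split (q X : ℂ) (hq : ‖q‖ < 1) :
    qPochInf X (q*q) = (1 - X) * qPochInf (X*q*q) (q*q) := by
  have hqq := norm_qq_lt q hq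
  have hshift : Multipliable (fun n : ℕ => 1 - X * (q*q)^(n+1)) := by
    apply (multipliable_qPochInf (X*q*q) (q*q) hqq).congr
    intro n
    rw [pow_succ']
    ring
  have h0 := tprod_eq_zero_mul' (f := fun n : ℕ => 1 - X*(q*q)^n) hshift
  rw [qPochInf, h0]
  congr 1
  · norm_num
  · rw [qPochInf]
    exact tprod_congr (fun n => by beta_reduce; rw [pow_succ']; ring)

theorem second_heine_type_identity (X q : ℂ) (hq : ‖q‖ < 1) :
    Summable (fun n : ℕ => ‖q ^ (n * (n + 3) / 2) * qPoch X q n / qPoch q q n‖) ∧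
    X * (∑' n : ℕ, q ^ (n * (n + 3) / 2) * qPoch X q n / qPoch q q n) =
      qPochInf (-q) q * (qPochInf (X * q) (q ^ 2) - qPochInf X (q ^ 2)) := by
  obtain ⟨c, hc, hcl⟩ := denom_lower q hq
  constructor
  · exact summable_norm_gen q hq hc hcl (qPoch X q)
      (norm_qPoch_le X q le_rfl hq) _ exp_ge_self_B
  · have hU : (∑' n : ℕ, q ^ (n * (n + 3) / 2) * qPoch X q n / qPoch q q n) = Uq q X := rfl
    rw [hU, pow_two]
    have h1 := main_alg q X hq
    have h2 := lebesgue q X hq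
    have h3 := lebesgue q (X*q) hq
    have h4 := pochinf_split q X hq
    rw [h1, h2, h3, h4]
    ring
end

section
/- For every w ∈ ℂ and every q ∈ ℂ with |q| < 1, the series ∑_{n≥0} (−1)^n·w^{2n}·q^{n(2n+1)} / ((−q;q²)_n·(q²;q²)_n) converges absolutely and equals (1/2)·[(wq;−q)_∞ + (−wq;−q)_∞]. -/
open Finset Filter Topology

namespace EvenPart

lemma qPoch_succ (a q : ℂ) (n : ℕ) : qPoch a q (n + 1) = qPoch a q n * (1 - a * q ^ n) :=
  Finset.prod_range_succ _ _

lemma tri (n : ℕ) : (n + 1) * ((n + 1) - 1) / 2 = n * (n - 1) / 2 + n := by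
  cases n with
  | zero => rfl
  | succ m =>
    simp only [Nat.add_sub_cancel]
    rw [show (m + 1 + 1) * (m + 1) = (m + 1) * m + (m + 1) * 2 from by ring,
      Nat.add_mul_div_right _ _ (by norm_num)]

noncomputable def c (q : ℂ) (n : ℕ) : ℂ := (-1) ^ n * q ^ (n * (n - 1) / 2) / qPoch q q n

noncomputable def t (q z : ℂ) (n : ℕ) : ℂ := c q n * z ^ n

variable {q : ℂ}

lemma hne (hq : ‖q‖ < 1) (k : ℕ) : (1 : ℂ) - q * q ^ k ≠ 0 := by
  intro h
  have h1 : q * q ^ k = 1 := by linear_combination -h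
  have h2 : ‖q * q ^ k‖ < 1 := by
    calc ‖q * q ^ k‖ = ‖q‖ * ‖q‖ ^ k := by rw [norm_mul, norm_pow]
    _ ≤ ‖q‖ * 1 := by
        refine mul_le_mul_of_nonneg_left ?_ (norm_nonneg q)
        exact pow_le_one₀ (norm_nonneg q) hq.le
    _ < 1 := by simpa using hq
  rw [h1] at h2; simp at h2

lemma qPoch_ne (hq : ‖q‖ < 1) (n : ℕ) : qPoch q q n ≠ 0 :=
  Finset.prod_ne_zero_iff.mpr fun k _ => hne hq k

lemma t_zero (z : ℂ) : t q z 0 = 1 := by simp [t, c, qPoch]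

lemma c_rec (hq : ‖q‖ < 1) (n : ℕ) :
    c q (n + 1) * (1 - q * q ^ n) = -(q ^ n) * c q n := by
  have hP := qPoch_ne hq n
  have h1 := hne hq n
  unfold c
  rw [tri n, qPoch_succ, pow_add, pow_succ]
  field_simp
  ring

lemma t_succ (hq : ‖q‖ < 1) (z : ℂ) (n : ℕ) :
    t q z (n + 1) = t q z n * (-(z * q ^ n) / (1 - q * q ^ n)) := by
  have h1 := hne hq n
  have h := c_rec hq n
  unfold t
  rw [← mul_div_assoc, eq_div_iff h1]
  linear_combination z ^ (n + 1) * h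

lemma norm_one_sub_ge (hq : ‖q‖ < 1) (n : ℕ) : 1 - ‖q‖ ≤ ‖(1 : ℂ) - q * q ^ n‖ := by
  have h1 : ‖q * q ^ n‖ ≤ ‖q‖ := by
    rw [norm_mul, norm_pow]
    calc ‖q‖ * ‖q‖ ^ n ≤ ‖q‖ * 1 :=
      mul_le_mul_of_nonneg_left (pow_le_one₀ (norm_nonneg q) hq.le) (norm_nonneg q)
    _ = ‖q‖ := mul_one _
  calc 1 - ‖q‖ ≤ ‖(1 : ℂ)‖ - ‖q * q ^ n‖ := by
        rw [norm_one]; linarith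
  _ ≤ ‖(1 : ℂ) - q * q ^ n‖ := norm_sub_norm_le _ _

lemma summable_norm_t (hq : ‖q‖ < 1) (z : ℂ) : Summable fun n => ‖t q z n‖ := by
  apply summable_of_ratio_norm_eventually_le (r := 1 / 2) (by norm_num)
  have h0 : Tendsto (fun n : ℕ => ‖z‖ * ‖q‖ ^ n) atTop (𝓝 0) := by
    simpa using (tendsto_pow_atTop_nhds_zero_of_lt_one (norm_nonneg q) hq).const_mul ‖z‖
  have hlt : (0 : ℝ) < (1 - ‖q‖) / 2 := by linarith
  filter_upwards [h0.eventually (eventually_le_nhds hlt)] with n hn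
  have h1 := hne hq n
  have h2 := norm_one_sub_ge hq n
  have h3 : (0 : ℝ) < ‖(1 : ℂ) - q * q ^ n‖ := by
    rw [norm_pos_iff]; exact h1
  rw [Real.norm_of_nonneg (norm_nonneg _), Real.norm_of_nonneg (norm_nonneg _),
    t_succ hq z n, norm_mul, norm_div, norm_neg, mul_comm ((1:ℝ)/2)]
  apply mul_le_mul_of_nonneg_left _ (norm_nonneg _)
  rw [div_le_iff₀ h3]
  calc ‖z * q ^ n‖ = ‖z‖ * ‖q‖ ^ n := by rw [norm_mul, norm_pow]
  _ ≤ (1 - ‖q‖) / 2 := hn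
  _ ≤ ‖(1 : ℂ) - q * q ^ n‖ / 2 := by linarith
  _ = 1 / 2 * ‖(1 : ℂ) - q * q ^ n‖ := by ring

lemma summable_t (hq : ‖q‖ < 1) (z : ℂ) : Summable (t q z) :=
  (summable_norm_t hq z).of_norm

lemma func_eq (hq : ‖q‖ < 1) (z : ℂ) :
    ∑' n, t q z n = (1 - z) * ∑' n, t q (q * z) n := by
  have hs1 := summable_t hq z
  have hs2 := summable_t hq (q * z)
  have key : ∀ n, t q z (n + 1) - t q (q * z) (n + 1) = -z * t q (q * z) n := by
    intro n
    have h := c_rec hq n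
    unfold t
    linear_combination z ^ (n + 1) * h
  have h0 : t q z 0 - t q (q * z) 0 = 0 := by rw [t_zero, t_zero, sub_self]
  have step : ∑' n, (t q z n - t q (q * z) n) = -z * ∑' n, t q (q * z) n := by
    rw [Summable.tsum_eq_zero_add (hs1.sub hs2), h0, zero_add, ← tsum_mul_left]
    exact tsum_congr fun n => key n
  have := Summable.tsum_sub hs1 hs2
  rw [step] at this
  linear_combination -this

lemma iter (hq : ‖q‖ < 1) (z : ℂ) (N : ℕ) :
    ∑' n, t q z n = qPoch z q N * ∑' n, t q (q ^ N * z) n := by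
  induction N with
  | zero => simp [qPoch]
  | succ N ih =>
    rw [ih, func_eq hq (q ^ N * z), qPoch_succ]
    rw [show q * (q ^ N * z) = q ^ (N + 1) * z from by ring]
    ring

set_option maxHeartbeats 1000000 in
lemma multipliable_poch (hq : ‖q‖ < 1) (z : ℂ) :
    Multipliable fun n : ℕ => 1 - z * q ^ n := by
  have h0 : Tendsto (fun n : ℕ => ‖z‖ * ‖q‖ ^ n) atTop (𝓝 0) := by
    simpa using (tendsto_pow_atTop_nhds_zero_of_lt_one (norm_nonneg q) hq).const_mul ‖z‖
  obtain ⟨K, hK⟩ := eventually_atTop.mp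
    (h0.eventually (eventually_le_nhds (by norm_num : (0:ℝ) < 1/2)))
  have hnorm : ∀ n : ℕ, ‖z * q ^ (n + K)‖ ≤ 1 / 2 := by
    intro n
    rw [norm_mul, norm_pow]
    exact hK (n + K) (Nat.le_add_left K n)
  have htail : Multipliable fun n : ℕ => 1 - z * q ^ (n + K) := by
    apply Complex.multipliable_of_summable_log
    · apply Summable.of_norm_bounded (g := fun n => 3 / 2 * (‖z‖ * ‖q‖ ^ K * ‖q‖ ^ n))
      · apply Summable.mul_left
        exact (summable_geometric_of_lt_one (norm_nonneg q) hq).mul_left _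
      · intro n
        have hb : ‖Complex.log (1 + -(z * q ^ (n + K)))‖ ≤ 3 / 2 * ‖-(z * q ^ (n + K))‖ :=
          Complex.norm_log_one_add_half_le_self (by rw [norm_neg]; exact hnorm n)
      
        calc ‖Complex.log (1 - z * q ^ (n + K))‖
            = ‖Complex.log (1 + -(z * q ^ (n + K)))‖ := by rw [sub_eq_add_neg]
        _ ≤ 3 / 2 * ‖-(z * q ^ (n + K))‖ := hb
        _ = 3 / 2 * (‖z‖ * ‖q‖ ^ K * ‖q‖ ^ n) := by
            rw [norm_neg, norm_mul, norm_pow, pow_add]; ring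
  exact (htail.hasProd.prod_range_mul).multipliable

lemma tendsto_poch (hq : ‖q‖ < 1) (z : ℂ) :
    Tendsto (fun N => qPoch z q N) atTop (𝓝 (qPochInf z q)) :=
  (multipliable_poch hq z).hasProd.tendsto_prod_nat

lemma tendsto_tail (hq : ‖q‖ < 1) (z : ℂ) :
    Tendsto (fun N => ∑' n, t q (q ^ N * z) n) atTop (𝓝 1) := by
  set Z : ℂ := ((‖z‖ + 1 : ℝ) : ℂ) with hZ
  have hZn : ‖Z‖ = ‖z‖ + 1 := by
    rw [hZ, Complex.norm_real, Real.norm_of_nonneg (by positivity)]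
  have hzpos : (0 : ℝ) < ‖z‖ + 1 := by positivity
  have hMs : Summable fun n => ‖t q Z (n + 1)‖ / (‖z‖ + 1) :=
    (((summable_nat_add_iff 1).mpr (summable_norm_t hq Z))).div_const _
  set M : ℝ := ∑' n, ‖t q Z (n + 1)‖ / (‖z‖ + 1) with hM
  have hM0 : 0 ≤ M := tsum_nonneg fun n => by positivity
  have bound : ∀ u : ℂ, ‖u‖ ≤ ‖z‖ → ‖(∑' n, t q u n) - 1‖ ≤ ‖u‖ * M := by
    intro u hu
    have hsu := summable_norm_t hq u
    have hsu1 : Summable fun n => ‖t q u (n + 1)‖ := (summable_nat_add_iff 1).mpr hsu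
    rw [Summable.tsum_eq_zero_add hsu.of_norm, t_zero, add_sub_cancel_left]
    calc ‖∑' n, t q u (n + 1)‖ ≤ ∑' n, ‖t q u (n + 1)‖ := norm_tsum_le_tsum_norm hsu1
    _ ≤ ∑' n, ‖u‖ * (‖t q Z (n + 1)‖ / (‖z‖ + 1)) := by
        apply Summable.tsum_le_tsum _ hsu1 (hMs.mul_left _)
        intro n
        have e1 : ‖t q u (n + 1)‖ = ‖c q (n + 1)‖ * ‖u‖ ^ (n + 1) := by
          rw [t, norm_mul, norm_pow]
        have e2 : ‖t q Z (n + 1)‖ = ‖c q (n + 1)‖ * (‖z‖ + 1) ^ (n + 1) := by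
          rw [t, norm_mul, norm_pow, hZn]
        rw [e1, e2]
        have e3 : ‖c q (n + 1)‖ * (‖z‖ + 1) ^ (n + 1) / (‖z‖ + 1)
            = ‖c q (n + 1)‖ * (‖z‖ + 1) ^ n := by
          rw [pow_succ, ← mul_assoc, mul_div_cancel_right₀ _ (ne_of_gt hzpos)]
        rw [mul_div_assoc] at e3 ⊢
        rw [e3, pow_succ]
        calc ‖c q (n + 1)‖ * (‖u‖ ^ n * ‖u‖)
            ≤ ‖c q (n + 1)‖ * ((‖z‖ + 1) ^ n * ‖u‖) := by
              apply mul_le_mul_of_nonneg_left _ (norm_nonneg _)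
              apply mul_le_mul_of_nonneg_right _ (norm_nonneg u)
              exact pow_le_pow_left₀ (norm_nonneg u) (by linarith) n
        _ = ‖u‖ * (‖c q (n + 1)‖ * (‖z‖ + 1) ^ n) := by ring
    _ = ‖u‖ * M := tsum_mul_left
  have hqn : ∀ N : ℕ, ‖q ^ N * z‖ ≤ ‖z‖ := by
    intro N
    rw [norm_mul, norm_pow]
    calc ‖q‖ ^ N * ‖z‖ ≤ 1 * ‖z‖ :=
      mul_le_mul_of_nonneg_right (pow_le_one₀ (norm_nonneg q) hq.le) (norm_nonneg z)
    _ = ‖z‖ := one_mul _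
  have key : Tendsto (fun N => (∑' n, t q (q ^ N * z) n) - 1) atTop (𝓝 0) := by
    apply squeeze_zero_norm (a := fun N : ℕ => ‖z‖ * M * ‖q‖ ^ N)
    · intro N
      calc ‖(∑' n, t q (q ^ N * z) n) - 1‖ ≤ ‖q ^ N * z‖ * M := bound _ (hqn N)
      _ = ‖q‖ ^ N * ‖z‖ * M := by rw [norm_mul, norm_pow]
      _ = ‖z‖ * M * ‖q‖ ^ N := by ring
    · simpa using (tendsto_pow_atTop_nhds_zero_of_lt_one (norm_nonneg q) hq).const_mul (‖z‖ * M)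
  have := key.add_const 1
  simpa using this

lemma euler (hq : ‖q‖ < 1) (z : ℂ) : ∑' n, t q z n = qPochInf z q := by
  have h1 : Tendsto (fun N => qPoch z q N * ∑' n, t q (q ^ N * z) n) atTop
      (𝓝 (qPochInf z q * 1)) := (tendsto_poch hq z).mul (tendsto_tail hq z)
  have h2 : (fun N => qPoch z q N * ∑' n, t q (q ^ N * z) n)
      = fun _ => ∑' n, t q z n := funext fun N => (iter hq z N).symm
  rw [h2, mul_one] at h1
  exact tendsto_nhds_unique tendsto_const_nhds h1

end EvenPart

namespace EvenPart

lemma poch_split (q : ℂ) (m : ℕ) :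
    qPoch (-q) (-q) (2 * m) = qPoch (-q) (q ^ 2) m * qPoch (q ^ 2) (q ^ 2) m := by
  induction m with
  | zero => simp [qPoch]
  | succ m ih =>
    have h1 : (-q : ℂ) ^ (2 * m) = (q ^ 2) ^ m := by rw [pow_mul, neg_sq]
    rw [show 2 * (m + 1) = (2 * m) + 1 + 1 from by ring, qPoch_succ, qPoch_succ,
      qPoch_succ, qPoch_succ, ih, pow_succ (-q : ℂ) (2 * m), h1]
    ring

lemma le_aux (m : ℕ) : m ≤ 2 * m * m := by
  rcases Nat.eq_zero_or_pos m with h | h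
  · simp [h]
  · calc m = m * 1 := by ring
    _ ≤ m * (2 * m) := Nat.mul_le_mul le_rfl (by omega)
    _ = 2 * m * m := by ring

lemma exp_even (m : ℕ) : ((-1 : ℂ)) ^ (2 * m * m - m) = (-1) ^ m := by
  have hle : m ≤ 2 * m * m := le_aux m
  have h2 : Even (2 * m * m) := ⟨m * m, by ring⟩
  have hiff : Even (2 * m * m - m) ↔ Even m := by
    rw [Nat.even_sub hle]
    tauto
  rcases Nat.even_or_odd m with h | h
  · rw [(hiff.mpr h).neg_one_pow, h.neg_one_pow]
  · have hodd : Odd (2 * m * m - m) := Nat.not_even_iff_odd.mp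
      (fun hE => (Nat.not_odd_iff_even.mpr (hiff.mp hE)) h)
    rw [hodd.neg_one_pow, h.neg_one_pow]

lemma t_even_eq {q : ℂ} (hq : ‖q‖ < 1) (w : ℂ) (m : ℕ) :
    t (-q) (w * q) (2 * m)
      = (-1 : ℂ) ^ m * w ^ (2 * m) * q ^ (m * (2 * m + 1)) /
        (qPoch (-q) (q ^ 2) m * qPoch (q ^ 2) (q ^ 2) m) := by
  have he : (2 * m) * ((2 * m) - 1) / 2 = 2 * m * m - m := by
    cases m with
    | zero => rfl
    | succ k =>
      rw [show 2 * (k + 1) - 1 = 2 * k + 1 from by omega,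
        show 2 * (k + 1) * (2 * k + 1) = ((k + 1) * (2 * k + 1)) * 2 from by ring,
        Nat.mul_div_cancel _ (by norm_num)]
      exact (Nat.sub_eq_of_eq_add (by ring)).symm
  rw [t, c, poch_split, he, neg_pow q, exp_even, mul_pow w q, pow_mul (-1 : ℂ) 2,
    neg_one_sq, one_pow,
    show m * (2 * m + 1) = (2 * m * m - m) + 2 * m from by
      have hle : m ≤ 2 * m * m := le_aux m
      have hb : m * (2 * m + 1) = 2 * m * m + m := by ring
      omega,
    pow_add]
  ring

end EvenPart

open EvenPart in
theorem even_part_product_identity (w q : ℂ) (hq : ‖q‖ < 1) :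
    Summable (fun n : ℕ =>
      ‖(-1 : ℂ) ^ n * w ^ (2 * n) * q ^ (n * (2 * n + 1)) /
        (qPoch (-q) (q ^ 2) n * qPoch (q ^ 2) (q ^ 2) n)‖) ∧
    (∑' n : ℕ, (-1 : ℂ) ^ n * w ^ (2 * n) * q ^ (n * (2 * n + 1)) /
        (qPoch (-q) (q ^ 2) n * qPoch (q ^ 2) (q ^ 2) n)) =
      (1 / 2 : ℂ) * (qPochInf (w * q) (-q) + qPochInf (-(w * q)) (-q)) := by
  have hQ : ‖(-q)‖ < 1 := by rwa [norm_neg]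
  have hinj : Function.Injective (fun m : ℕ => 2 * m) := fun a b h => by
    have h2 : 2 * a = 2 * b := h
    omega
  have hterm : ∀ m : ℕ, t (-q) (w * q) (2 * m)
      = (-1 : ℂ) ^ m * w ^ (2 * m) * q ^ (m * (2 * m + 1)) /
        (qPoch (-q) (q ^ 2) m * qPoch (q ^ 2) (q ^ 2) m) := t_even_eq hq w
  have hsa := summable_norm_t hQ (w * q)
  have hsb := summable_norm_t hQ (-(w * q))
  constructor
  · have := (hsa.comp_injective hinj)
    apply this.congr
    intro m
    simp only [Function.comp]
    rw [hterm m]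
  · have hb_eq : ∀ n, t (-q) (-(w * q)) n = (-1 : ℂ) ^ n * t (-q) (w * q) n := by
      intro n
      rw [t, t, neg_pow (w * q) n]
      ring
    have hhalf : ∀ n, (1 / 2 : ℂ) * (t (-q) (w * q) n + t (-q) (-(w * q)) n)
        = (1 / 2 : ℂ) * (1 + (-1 : ℂ) ^ n) * t (-q) (w * q) n := by
      intro n
      rw [hb_eq n]; ring
    have hsupp : Function.support
        (fun n => (1 / 2 : ℂ) * (t (-q) (w * q) n + t (-q) (-(w * q)) n))
        ⊆ Set.range (fun m : ℕ => 2 * m) := by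
      intro n hn
      rcases Nat.even_or_odd n with he | ho
      · obtain ⟨k, hk⟩ := he
        exact ⟨k, by show 2 * k = n; omega⟩
      · exfalso
        apply hn
        show (1 / 2 : ℂ) * (t (-q) (w * q) n + t (-q) (-(w * q)) n) = 0
        rw [hhalf n, ho.neg_one_pow]
        ring
    have htsum := Function.Injective.tsum_eq hinj hsupp
    calc (∑' n : ℕ, (-1 : ℂ) ^ n * w ^ (2 * n) * q ^ (n * (2 * n + 1)) /
        (qPoch (-q) (q ^ 2) n * qPoch (q ^ 2) (q ^ 2) n))
        = ∑' m : ℕ, (1 / 2 : ℂ) * (t (-q) (w * q) (2 * m) + t (-q) (-(w * q)) (2 * m)) := by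
          apply tsum_congr
          intro m
          rw [hhalf (2 * m), ← hterm m]
          rw [show ((-1 : ℂ)) ^ (2 * m) = 1 from by
            rw [pow_mul]; norm_num]
          ring
    _ = ∑' n : ℕ, (1 / 2 : ℂ) * (t (-q) (w * q) n + t (-q) (-(w * q)) n) := htsum
    _ = (1 / 2 : ℂ) * ∑' n : ℕ, (t (-q) (w * q) n + t (-q) (-(w * q)) n) := tsum_mul_left
    _ = (1 / 2 : ℂ) * ((∑' n, t (-q) (w * q) n) + ∑' n, t (-q) (-(w * q)) n) := by
          rw [Summable.tsum_add hsa.of_norm hsb.of_norm]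
    _ = (1 / 2 : ℂ) * (qPochInf (w * q) (-q) + qPochInf (-(w * q)) (-q)) := by
          rw [euler hQ (w * q), euler hQ (-(w * q))]
end
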